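/- arXiv:1806.03470 — 7 statements merged into one kernel-verified Lean document; each statement's English description precedes it below -/
import Mathlib

section
/- Let N and R be normal subgroups of a finite group G and set L = N ∩ R. Suppose χ ∈ Irr(G) is faithful, χ_N is irreducible, and L is contained in the center Z(G) of G. If the quotient group R/L is perfect, then R = L. -/
open scoped BigOperators Classical Pointwise

noncomputable section

/-- `f` is the character of an irreducible complex representation of `H`. -/
def IsIrrChar (H : Type) [Group H] (f : H → ℂ) : Prop :=
  ∃ V : FDRep ℂ H, CategoryTheory.Simple V ∧ V.character = f

/-- `f` is a positive integer multiple of an irreducible character, i.e. homogeneous. -/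
def IsHomogeneous (H : Type) [Group H] (f : H → ℂ) : Prop :=
  ∃ (ψ : H → ℂ) (n : ℕ+), IsIrrChar H ψ ∧ f = fun h => (n : ℂ) * ψ h

/-- The standard inner product of class functions on a finite group. -/
def charInner (H : Type) [Group H] [Fintype H] (f g : H → ℂ) : ℂ :=
  (Fintype.card H : ℂ)⁻¹ * ∑ x : H, f x * starRingEnd ℂ (g x)

variable {G : Type} [Group G]

/-- Restriction of a class function along `C ≤ A`. -/
def resSub {A C : Subgroup G} (h : C ≤ A) (f : ↥A → ℂ) : ↥C → ℂ :=
  fun c => f ⟨(c : G), h c.2⟩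

/-- Induction of a class function from `B` to `A`, where `B ≤ A`. -/
def indSub [Fintype G] {B A : Subgroup G} (_h : B ≤ A) (f : ↥B → ℂ) : ↥A → ℂ :=
  fun a => (Fintype.card ↥B : ℂ)⁻¹ *
    ∑ x : ↥A, if hx : (x : G) * (a : G) * (x : G)⁻¹ ∈ B then f ⟨_, hx⟩ else 0

/-- Induction of a class function from `A` to `G`. -/
def indG [Fintype G] (A : Subgroup G) (f : ↥A → ℂ) : G → ℂ :=
  fun g => (Fintype.card ↥A : ℂ)⁻¹ *
    ∑ x : G, if hx : x * g * x⁻¹ ∈ A then f ⟨_, hx⟩ else 0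

/-- `f` (a character of `A`) lies over `γ` (a character of `C ≤ A`), i.e. `γ` is a
constituent of the restriction of `f` to `C`. -/
def LiesOver [Fintype G] {A C : Subgroup G} (h : C ≤ A) (f : ↥A → ℂ) (γ : ↥C → ℂ) : Prop :=
  charInner ↥C (resSub h f) γ ≠ 0

/-- The conjugate `γ^g` equals `γ`, i.e. `γ (g x g⁻¹) = γ x` for all `x ∈ C`. -/
def ConjFix {C : Subgroup G} (γ : ↥C → ℂ) (g : G) : Prop :=
  ∀ (x : G) (hx : x ∈ C) (hx' : g * x * g⁻¹ ∈ C), γ ⟨g * x * g⁻¹, hx'⟩ = γ ⟨x, hx⟩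

/-- The conjugate character `φ^g`, given by `φ^g (x) = φ (g x g⁻¹)`, for `R` normal. -/
def conjChar {R : Subgroup G} (hR : R.Normal) (φ : ↥R → ℂ) (g : G) : ↥R → ℂ :=
  fun x => φ ⟨g * (x : G) * g⁻¹, hR.conj_mem (x : G) x.2 g⟩

/-- A character pair `(A, α)` in `G` inducing the character `χ` of `G`. -/
structure CharPair (G : Type) [Group G] [Fintype G] (χ : G → ℂ) where
  A : Subgroup G
  α : ↥A → ℂ
  irr : IsIrrChar ↥A α
  ind_eq : indG A α = χ

/-- `w = (B, β)` arises from `v = (A, α)` by a Clifford correspondence with respect to a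
character pair `(C, γ)` with `C ◁ A` and `C ⊆ N`: `B` is the stabilizer of `γ` in `A` and
`β` is the Clifford correspondent of `α` with respect to `γ`. -/
def EdgeSpec [Fintype G] {χ : G → ℂ} (N : Subgroup G) (v w : CharPair G χ) : Prop :=
  ∃ (C : Subgroup G) (γ : ↥C → ℂ) (_hCA : C ≤ v.A) (hCB : C ≤ w.A) (hBA : w.A ≤ v.A),
    (∀ a ∈ v.A, ∀ c ∈ C, a * c * a⁻¹ ∈ C) ∧
    C ≤ N ∧
    IsIrrChar ↥C γ ∧
    ((w.A : Set G) = {a : G | a ∈ v.A ∧ ConjFix γ a}) ∧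
    LiesOver hCB w.α γ ∧
    indSub hBA w.α = v.α

/-- The Clifford induction graph `C_N(χ)`. -/
def cliffordGraph [Fintype G] (χ : G → ℂ) (N : Subgroup G) : SimpleGraph (CharPair G χ) where
  Adj v w := v ≠ w ∧ (EdgeSpec N v w ∨ EdgeSpec N w v)
  symm := ⟨fun v w h => ⟨h.1.symm, h.2.symm⟩⟩
  loopless := ⟨fun v h => h.1 rfl⟩

/-- The set `Δ` of linear characters `λ` of `R` trivial on `L = N ⊓ R` such that
`φλ = φ^g` for some `g ∈ N`. -/
def Delta (N R : Subgroup G) (φ : ↥R → ℂ) : Set (↥R →* ℂˣ) :=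
  {lam | (∀ x : ↥R, (x : G) ∈ N ⊓ R → lam x = 1) ∧
    ∃ g ∈ N, ∀ (x : ↥R) (hx : g * (x : G) * g⁻¹ ∈ R),
      φ x * (lam x : ℂ) = φ ⟨g * (x : G) * g⁻¹, hx⟩}

set_option maxHeartbeats 1600000

open CategoryTheory Module Representation
open scoped commutatorElement

lemma myaux_dim {H : Type} [Group H] [Fintype H] (W : FDRep ℂ H) (hW : CategoryTheory.Simple W)
    {E : Type} [AddCommGroup E] [Module ℂ E] [FiniteDimensional ℂ E]
    (π : Representation ℂ H E)
    (hchar : ∀ h : H, W.character h = LinearMap.trace ℂ E (π h)) :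
    Module.finrank ℂ (Representation.linHom π π).invariants = 1 := by
  haveI := hW
  haveI hinv : Invertible ((Fintype.card H : ℂ)) :=
    invertibleOfNonzero (by exact_mod_cast Fintype.card_ne_zero)
  have h1 : ⅟(Fintype.card H : ℂ) • ∑ g : H, (FDRep.of (Representation.linHom π π)).character g
      = (Module.finrank ℂ (Representation.linHom π π).invariants : ℂ) :=
    by have := FDRep.average_char_eq_finrank_invariants (FDRep.of (Representation.linHom π π))
       rw [invOf_eq_inv, smul_eq_mul, ← Nat.card_eq_fintype_card]; exact this
  have h2 : ⅟(Fintype.card H : ℂ) • ∑ g : H, (FDRep.of (Representation.linHom W.ρ W.ρ)).character g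
      = (Module.finrank ℂ (Representation.linHom W.ρ W.ρ).invariants : ℂ) :=
    by have := FDRep.average_char_eq_finrank_invariants (FDRep.of (Representation.linHom W.ρ W.ρ))
       rw [invOf_eq_inv, smul_eq_mul, ← Nat.card_eq_fintype_card]; exact this
  have hsum : ∑ h : H, (FDRep.of (Representation.linHom π π)).character h
      = ∑ h : H, (FDRep.of (Representation.linHom W.ρ W.ρ)).character h := by
    apply Finset.sum_congr rfl
    intro h _
    have e1 := FDRep.char_linHom (FDRep.of π) (FDRep.of π) h
    have e2 := FDRep.char_linHom W W h
    have eπ : ∀ g : H, (FDRep.of π).character g = LinearMap.trace ℂ E (π g) := fun g => rfl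
    rw [show (FDRep.of (Representation.linHom π π)) = FDRep.of (Representation.linHom (FDRep.of π).ρ (FDRep.of π).ρ) from rfl]
    rw [e1, e2, eπ, eπ, hchar, hchar]
  have hcast : ((Module.finrank ℂ (Representation.linHom π π).invariants : ℂ))
      = ((Module.finrank ℂ (Representation.linHom W.ρ W.ρ).invariants : ℂ)) := by
    rw [← h1, ← h2, hsum]
  have h3 : Module.finrank ℂ (Representation.linHom π π).invariants
      = Module.finrank ℂ (Representation.linHom W.ρ W.ρ).invariants := by exact_mod_cast hcast
  have h4 := LinearEquiv.finrank_eq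
    (Representation.linHom.invariantsEquivFDRepHom W W)
  rw [h3, h4]
  exact CategoryTheory.finrank_endomorphism_simple_eq_one ℂ W

/-- Let `N, R ◁ G`, `L = N ⊓ R`, and `χ ∈ Irr(G)` faithful with `χ_N` irreducible and
`L ⊆ Z(G)`. If `R/L` is perfect, then `R = L`. -/
theorem statement3 {G : Type} [Group G] [Fintype G] (N R : Subgroup G) [N.Normal] [R.Normal]
    [((N ⊓ R).subgroupOf R).Normal]
    (χ : G → ℂ) (hχ : IsIrrChar G χ)
    (hfaithful : ∀ g : G, χ g = χ 1 → g = 1)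
    (hresN : IsIrrChar ↥N fun n : ↥N => χ ↑n)
    (hcenter : N ⊓ R ≤ Subgroup.center G)
    (hperf : commutator (↥R ⧸ (N ⊓ R).subgroupOf R) = ⊤) :
    R = N ⊓ R := by
  unfold IsIrrChar at hχ hresN
  classical
  obtain ⟨V, hVsimp, hVchar⟩ := hχ
  obtain ⟨W, hWsimp, hWchar⟩ := hresN
  haveI := hVsimp
  -- kernel of the representation is trivial
  have hker : ∀ g : G, V.ρ g = 1 → g = 1 := by
    intro g hg
    apply hfaithful
    rw [← hVchar]
    show LinearMap.trace ℂ _ (V.ρ g) = LinearMap.trace ℂ _ (V.ρ 1)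
    rw [hg, map_one V.ρ]
  -- identity is nonzero
  have hid0 : (LinearMap.id : V →ₗ[ℂ] V) ≠ 0 := by
    intro h
    have hne : (𝟙 V : V ⟶ V) ≠ 0 := CategoryTheory.id_nonzero V
    apply hne
    have hz : ∀ x : V, x = 0 := by
      intro x
      have := congrFun (congrArg (fun (f : V →ₗ[ℂ] V) => (f : V → V)) h) x
      simpa using this
    apply Action.Hom.ext
    ext x
    rw [hz x]
    simp
  -- scalar injectivity
  have hμinj : ∀ a b : ℂ, a • (1 : V →ₗ[ℂ] V) = b • 1 → a = b := by
    intro a b hab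
    have h0 : (a - b) • (1 : V →ₗ[ℂ] V) = 0 := by rw [sub_smul, hab, sub_self]
    by_contra hne
    apply hid0
    have h2 : (1 : V →ₗ[ℂ] V) = 0 := by
      calc (1 : V →ₗ[ℂ] V) = (a - b)⁻¹ • ((a - b) • 1) := by
            rw [smul_smul, inv_mul_cancel₀ (sub_ne_zero.mpr hne), one_smul]
        _ = 0 := by rw [h0, smul_zero]
    rw [← Module.End.one_eq_id, h2]
  -- Schur: anything commuting with the image of N is scalar
  have hWc : ∀ m : ↥N, W.character m
      = LinearMap.trace ℂ _ ((V.ρ.comp N.subtype) m) := by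
    intro m
    have h := congrFun hWchar m
    rw [h, ← hVchar]
    rfl
  have hdim := myaux_dim W hWsimp (V.ρ.comp N.subtype) hWc
  have hscalar : ∀ f : V →ₗ[ℂ] V, (∀ m : ↥N, V.ρ ↑m * f = f * V.ρ ↑m) →
      ∃ c : ℂ, f = c • 1 := by
    intro f hf
    set π := V.ρ.comp N.subtype with hπ
    have hmemf : f ∈ (Representation.linHom π π).invariants := by
      rw [Representation.mem_invariants]
      intro m
      rw [Representation.linHom_apply]
      show V.ρ ↑m ∘ₗ (f ∘ₗ V.ρ ↑(m⁻¹)) = f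
      simp only [← Module.End.mul_eq_comp]
      rw [← mul_assoc, hf m, mul_assoc, ← map_mul]
      simp
    have hmemid : (LinearMap.id : V →ₗ[ℂ] V) ∈ (Representation.linHom π π).invariants := by
      rw [Representation.mem_invariants]
      intro m
      rw [Representation.linHom_apply]
      show V.ρ ↑m ∘ₗ (LinearMap.id ∘ₗ V.ρ ↑(m⁻¹)) = LinearMap.id
      rw [LinearMap.id_comp]
      simp only [← Module.End.mul_eq_comp, ← map_mul]
      simp [Module.End.one_eq_id]
    have hspan : (Representation.linHom π π).invariants
        = Submodule.span ℂ {(LinearMap.id : V →ₗ[ℂ] V)} := by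
      symm
      apply Submodule.eq_of_le_of_finrank_le
      · rw [Submodule.span_le, Set.singleton_subset_iff]; exact hmemid
      · rw [hdim, finrank_span_singleton hid0]
    have hmem2 : f ∈ Submodule.span ℂ {(LinearMap.id : V →ₗ[ℂ] V)} := hspan ▸ hmemf
    obtain ⟨c, hc⟩ := Submodule.mem_span_singleton.mp hmem2
    exact ⟨c, by rw [Module.End.one_eq_id, ← hc]⟩
  -- scalars are central
  have hcentralize : ∀ g : G, (∃ c : ℂ, V.ρ g = c • 1) → g ∈ Subgroup.center G := by
    rintro g ⟨c, hc⟩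
    rw [Subgroup.mem_center_iff]
    intro h
    have hcomm : V.ρ (h * g) = V.ρ (g * h) := by
      rw [map_mul, map_mul, hc]
      simp [smul_mul_assoc, mul_smul_comm]
    have h1 : V.ρ ((g * h)⁻¹ * (h * g)) = 1 := by
      rw [map_mul, hcomm, ← map_mul, inv_mul_cancel, map_one]
    exact (inv_mul_eq_one.mp (hker _ h1)).symm
  -- elements of L = N ⊓ R act as scalars
  have hLscalar : ∀ z ∈ N ⊓ R, ∃ c : ℂ, V.ρ z = c • 1 := by
    intro z hz
    apply hscalar
    intro m
    rw [← map_mul, ← map_mul, Subgroup.mem_center_iff.mp (hcenter hz) ↑m]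
  -- main commuting step
  have hcommNR : ∀ n ∈ N, ∀ r : ↥R, V.ρ (↑r * n * (↑r : G)⁻¹ * n⁻¹) = 1 := by
    intro n hn
    have hmemL : ∀ r : ↥R, (↑r : G) * n * (↑r : G)⁻¹ * n⁻¹ ∈ N ⊓ R := by
      intro r
      refine Subgroup.mem_inf.mpr ⟨mul_mem ((inferInstance : N.Normal).conj_mem n hn ↑r)
        (N.inv_mem hn), ?_⟩
      have he : (↑r : G) * n * (↑r : G)⁻¹ * n⁻¹ = ↑r * (n * (↑r : G)⁻¹ * n⁻¹) := by group
      rw [he]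
      exact mul_mem r.2 ((inferInstance : R.Normal).conj_mem _ (R.inv_mem r.2) n)
    have hcmul : ∀ r s : ↥R, ((↑(r*s) : G) * n * (↑(r*s) : G)⁻¹ * n⁻¹)
        = ((↑s : G) * n * (↑s : G)⁻¹ * n⁻¹) * ((↑r : G) * n * (↑r : G)⁻¹ * n⁻¹) := by
      intro r s
      have hcent := Subgroup.mem_center_iff.mp (hcenter (hmemL s))
      have h1 : ((↑(r*s) : G) * n * (↑(r*s) : G)⁻¹ * n⁻¹)
          = ↑r * ((↑s : G) * n * (↑s : G)⁻¹ * n⁻¹) * (↑r : G)⁻¹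
            * ((↑r : G) * n * (↑r : G)⁻¹ * n⁻¹) := by
        rw [Subgroup.coe_mul]
        group
      rw [h1, hcent ↑r]
      group
    have hcone : ((↑(1 : ↥R) : G) * n * (↑(1 : ↥R) : G)⁻¹ * n⁻¹) = 1 := by
      simp
    let K : Subgroup ↥R :=
      { carrier := {r : ↥R | V.ρ ((↑r : G) * n * (↑r : G)⁻¹ * n⁻¹) = 1}
        one_mem' := by
          show V.ρ _ = 1
          rw [hcone, map_one]
        mul_mem' := by
          intro a b ha hb
          show V.ρ _ = 1
          rw [hcmul a b, map_mul]
          rw [Set.mem_setOf_eq] at ha hb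
          rw [ha, hb, mul_one]
        inv_mem' := by
          intro a ha
          rw [Set.mem_setOf_eq] at ha
          show V.ρ _ = 1
          have h0 := hcmul a a⁻¹
          rw [mul_inv_cancel, hcone] at h0
          have h1 := congrArg V.ρ h0.symm
          rw [map_mul, ha, mul_one, map_one] at h1
          exact h1 }
    have hKcomm : commutator ↥R ≤ K := by
      rw [commutator_def, Subgroup.commutator_le]
      intro a _ b _
      show V.ρ ((↑(⁅a, b⁆) : G) * n * (↑(⁅a, b⁆) : G)⁻¹ * n⁻¹) = 1
      have hexp : (↑(⁅a, b⁆) : G) * n * (↑(⁅a, b⁆) : G)⁻¹ * n⁻¹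
          = (((b⁻¹ : ↥R) : G) * n * ((b⁻¹ : ↥R) : G)⁻¹ * n⁻¹)
            * ((((a⁻¹ : ↥R) : G) * n * ((a⁻¹ : ↥R) : G)⁻¹ * n⁻¹)
              * ((((b : ↥R) : G) * n * ((b : ↥R) : G)⁻¹ * n⁻¹)
                * (((a : ↥R) : G) * n * ((a : ↥R) : G)⁻¹ * n⁻¹))) := by
        rw [show (⁅a, b⁆ : ↥R) = a * b * a⁻¹ * b⁻¹ from rfl, hcmul (a * b * a⁻¹) b⁻¹,
          hcmul (a * b) a⁻¹, hcmul a b]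
      rw [hexp]
      obtain ⟨x1, e1⟩ := hLscalar _ (hmemL b⁻¹)
      obtain ⟨x2, e2⟩ := hLscalar _ (hmemL a⁻¹)
      obtain ⟨x3, e3⟩ := hLscalar _ (hmemL b)
      obtain ⟨x4, e4⟩ := hLscalar _ (hmemL a)
      have hainv : x2 * x4 = 1 := by
        have h0 := hcmul a a⁻¹
        rw [mul_inv_cancel, hcone] at h0
        have h1 := congrArg V.ρ h0.symm
        rw [map_mul, e2, e4, map_one] at h1
        rw [smul_mul_assoc, one_mul, smul_smul] at h1
        apply hμinj
        rw [h1, one_smul]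
      have hbinv : x1 * x3 = 1 := by
        have h0 := hcmul b b⁻¹
        rw [mul_inv_cancel, hcone] at h0
        have h1 := congrArg V.ρ h0.symm
        rw [map_mul, e1, e3, map_one] at h1
        rw [smul_mul_assoc, one_mul, smul_smul] at h1
        apply hμinj
        rw [h1, one_smul]
      generalize hg1 : (((b⁻¹ : ↥R) : G) * n * ((b⁻¹ : ↥R) : G)⁻¹ * n⁻¹ : G) = c1 at e1 ⊢
      generalize hg2 : (((a⁻¹ : ↥R) : G) * n * ((a⁻¹ : ↥R) : G)⁻¹ * n⁻¹ : G) = c2 at e2 ⊢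
      generalize hg3 : (((b : ↥R) : G) * n * ((b : ↥R) : G)⁻¹ * n⁻¹ : G) = c3 at e3 ⊢
      generalize hg4 : (((a : ↥R) : G) * n * ((a : ↥R) : G)⁻¹ * n⁻¹ : G) = c4 at e4 ⊢
      rw [map_mul, map_mul, map_mul, e1, e2, e3, e4]
      simp only [smul_mul_assoc, one_mul, smul_smul]
      rw [show x1 * (x2 * (x3 * x4)) = (x1 * x3) * (x2 * x4) from by ring, hainv, hbinv,
        one_mul, one_smul]
    have hKL : (N ⊓ R).subgroupOf R ≤ K := by
      intro x hx
      show V.ρ ((↑x : G) * n * (↑x : G)⁻¹ * n⁻¹) = 1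
      have hc := Subgroup.mem_center_iff.mp (hcenter (Subgroup.mem_subgroupOf.mp hx))
      have he : (↑x : G) * n * (↑x : G)⁻¹ * n⁻¹ = 1 := by
        rw [show (↑x : G) * n = n * ↑x from (hc n).symm]
        group
      rw [he, map_one]
    have hmaps : Subgroup.map (QuotientGroup.mk' ((N ⊓ R).subgroupOf R)) (commutator ↥R) = ⊤ := by
      rw [commutator_def, Subgroup.map_commutator,
        Subgroup.map_top_of_surjective _ (QuotientGroup.mk'_surjective _), ← commutator_def, hperf]
    have hsup : commutator ↥R ⊔ (N ⊓ R).subgroupOf R = ⊤ := by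
      rw [eq_top_iff]
      intro x _
      have hx : QuotientGroup.mk' ((N ⊓ R).subgroupOf R) x
          ∈ Subgroup.map (QuotientGroup.mk' ((N ⊓ R).subgroupOf R)) (commutator ↥R) := by
        rw [hmaps]; trivial
      obtain ⟨y, hy, hyx⟩ := hx
      rw [QuotientGroup.mk'_eq_mk'] at hyx
      obtain ⟨z, hz, hzx⟩ := hyx
      rw [← hzx]
      exact mul_mem (Subgroup.mem_sup_left hy) (Subgroup.mem_sup_right hz)
    have hKtop : K = ⊤ := eq_top_iff.mpr (hsup ▸ sup_le hKcomm hKL)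
    intro r
    have hrK : r ∈ K := hKtop ▸ Subgroup.mem_top r
    exact hrK
  -- every element of R is central
  have hRcent : ∀ r : ↥R, (r : G) ∈ Subgroup.center G := by
    intro r
    apply hcentralize
    apply hscalar
    intro m
    have h2 : (↑r : G) * ↑m * (↑r : G)⁻¹ * (↑m : G)⁻¹ = 1 := hker _ (hcommNR ↑m m.2 r)
    have h4 : ((↑r : G) * ↑m) * ((↑m : G) * ↑r)⁻¹ = 1 := by
      rw [mul_inv_rev, ← mul_assoc]; exact h2
    have h3 : (↑r : G) * ↑m = ↑m * ↑r := mul_inv_eq_one.mp h4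
    rw [← map_mul, ← map_mul]
    exact congrArg V.ρ h3.symm
  -- quotient is abelian
  have hQcomm : ∀ p q : ↥R ⧸ (N ⊓ R).subgroupOf R, p * q = q * p := by
    intro p q
    obtain ⟨x, rfl⟩ := QuotientGroup.mk_surjective p
    obtain ⟨y, rfl⟩ := QuotientGroup.mk_surjective q
    show QuotientGroup.mk (x * y) = QuotientGroup.mk (y * x)
    congr 1
    apply Subtype.ext
    rw [Subgroup.coe_mul, Subgroup.coe_mul]
    exact Subgroup.mem_center_iff.mp (hRcent y) ↑x
  have hbot : commutator (↥R ⧸ (N ⊓ R).subgroupOf R) ≤ ⊥ := by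
    rw [commutator_def, Subgroup.commutator_le]
    intro a _ b _
    rw [Subgroup.mem_bot, commutatorElement_def, hQcomm a b]
    group
  have hall : ∀ x : ↥R, (↑x : G) ∈ N ⊓ R := by
    intro x
    have h1 : (QuotientGroup.mk x : ↥R ⧸ (N ⊓ R).subgroupOf R) = 1 :=
      Subgroup.mem_bot.mp (hbot (hperf.ge (Subgroup.mem_top _)))
    exact Subgroup.mem_subgroupOf.mp ((QuotientGroup.eq_one_iff x).mp h1)
  exact le_antisymm (fun x hx => hall ⟨x, hx⟩) inf_le_right
end
end

section
/- Let G be a group, let N and R be normal subgroups of G, and let L be a subgroup with L ⊆ Z(G), [N, R] ⊆ L, and R = [R, R]·L (i.e., R/L is perfect modulo the central subgroup L). Then [N, R] = 1; that is, R centralizes N. -/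
open scoped BigOperators Classical Pointwise

noncomputable section

variable {G : Type} [Group G]

/-- If `N, R ◁ G`, `L ⊆ Z(G)`, `[N, R] ⊆ L` and `R = [R, R]·L`, then `[N, R] = 1`,
i.e. `R` centralizes `N`. -/
theorem statement4 {G : Type*} [Group G] (N R L : Subgroup G) [N.Normal] [R.Normal]
    (hLZ : L ≤ Subgroup.center G) (hNRL : ⁅N, R⁆ ≤ L) (hperf : ⁅R, R⁆ ⊔ L = R) :
    ⁅N, R⁆ = ⊥ := by
  have hcent : ⁅N, R⁆ ≤ Subgroup.center G := hNRL.trans hLZ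
  have h1 : ⁅⁅R, N⁆, R⁆ = ⊥ := by
    rw [Subgroup.commutator_eq_bot_iff_le_centralizer]
    exact ((Subgroup.commutator_comm_le R N).trans hcent).trans (Subgroup.center_le_centralizer _)
  have h2 : ⁅⁅N, R⁆, R⁆ = ⊥ := by
    rw [Subgroup.commutator_eq_bot_iff_le_centralizer]
    exact hcent.trans (Subgroup.center_le_centralizer _)
  have h3 : ⁅⁅R, R⁆, N⁆ = ⊥ :=
    Subgroup.commutator_commutator_eq_bot_of_rotate h1 h2
  rw [Subgroup.commutator_eq_bot_iff_le_centralizer, Subgroup.le_centralizer_iff, ← hperf]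
  exact sup_le (Subgroup.commutator_eq_bot_iff_le_centralizer.mp h3)
    (hLZ.trans (Subgroup.center_le_centralizer _))
end
end

section
/- Let G be a finite group, χ ∈ Irr(G), and let N ≤ M be subgroups of G. If the restriction χ_N is irreducible and χ(x) = 0 for every x ∈ M \ N, then M = N. -/
open scoped BigOperators Classical Pointwise

noncomputable section

variable {G : Type} [Group G]

/-- If `χ ∈ Irr(G)`, `N ≤ M` are subgroups, `χ_N` is irreducible and `χ` vanishes on
`M \ N`, then `M = N`. -/
theorem statement6 {G : Type} [Group G] [Fintype G] (χ : G → ℂ) (hχ : IsIrrChar G χ)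
    (N M : Subgroup G) (hNM : N ≤ M)
    (hres : IsIrrChar ↥N fun n : ↥N => χ ↑n)
    (hvan : ∀ x ∈ M, x ∉ N → χ x = 0) :
    M = N := by
  classical
  obtain ⟨V, hV, hVchar⟩ := hχ
  obtain ⟨U, hU, hUchar⟩ := hres
  haveI := hU
  have hcN : ((Fintype.card ↥N : ℂ)) ≠ 0 := by exact_mod_cast Fintype.card_ne_zero
  have hcM : ((Fintype.card ↥M : ℂ)) ≠ 0 := by exact_mod_cast Fintype.card_ne_zero
  haveI : Invertible ((Fintype.card ↥N : ℂ)) := invertibleOfNonzero hcN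
  haveI : Invertible ((Fintype.card ↥M : ℂ)) := invertibleOfNonzero hcM
  letI : Invertible ((Nat.card ↥N : ℂ)) :=
    invertibleOfNonzero (by rw [Nat.card_eq_fintype_card]; exact hcN)
  letI : Invertible ((Nat.card ↥M : ℂ)) :=
    invertibleOfNonzero (by rw [Nat.card_eq_fintype_card]; exact hcM)
  have hcc : (Nat.card ↥N) = Fintype.card ↥N :=
    Nat.card_eq_fintype_card
  set f : G → ℂ := fun x => χ x * χ x⁻¹ with hf
  -- Step 1: sum over N is card N
  have hN : ∑ n : ↥N, f ↑n = (Fintype.card ↥N : ℂ) := by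
    have h := FDRep.char_orthonormal (k := ℂ) (G := ↥N) U U
    rw [if_pos ⟨CategoryTheory.Iso.refl U⟩] at h
    have h2 : (Nat.card ↥N : ℂ)⁻¹ * ∑ n : ↥N, U.character n * U.character n⁻¹ = 1 := by
      simpa [invOf_eq_inv, smul_eq_mul] using h
    rw [hcc, inv_mul_eq_one₀ hcN] at h2
    rw [h2]
    refine Finset.sum_congr rfl fun n _ => ?_
    simp [hUchar, hf]
  -- Step 2: sum over M equals sum over N
  have hMN : ∑ m : ↥M, f ↑m = ∑ n : ↥N, f ↑n := by
    have eM : ∑ m : ↥M, f ↑m = ∑ x ∈ Finset.univ.filter (· ∈ M), f x :=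
      (Finset.sum_subtype _ (by simp) f).symm
    have eN : ∑ n : ↥N, f ↑n = ∑ x ∈ Finset.univ.filter (· ∈ N), f x :=
      (Finset.sum_subtype _ (by simp) f).symm
    rw [eM, eN]
    refine (Finset.sum_subset ?_ ?_).symm
    · intro x hx
      simp only [Finset.mem_filter, Finset.mem_univ, true_and] at *
      exact hNM hx
    · intro x hx hx'
      simp only [Finset.mem_filter, Finset.mem_univ, true_and] at hx hx'
      simp [hf, hvan x hx hx']
  -- Step 3: sum over M equals card M times a natural number
  set W : FDRep ℂ ↥M := FDRep.of (V.ρ.comp M.subtype) with hWdef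
  have hW : ∀ m : ↥M, W.character m = χ ↑m := fun m => by
    rw [← hVchar]; rfl
  set T : FDRep ℂ ↥M := FDRep.of (Representation.linHom W.ρ W.ρ) with hTdef
  have havg := FDRep.average_char_eq_finrank_invariants (k := ℂ) (G := ↥M) T
  set d : ℕ := Module.finrank ℂ (Representation.invariants T.ρ) with hd
  have hM : ∑ m : ↥M, f ↑m = (Fintype.card ↥M : ℂ) * d := by
    have h3 : ∑ m : ↥M, T.character m = ∑ m : ↥M, f ↑m := by
      refine Finset.sum_congr rfl fun m _ => ?_
      have := FDRep.char_linHom W W m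
      rw [hTdef] at *
      rw [this, hW, hW]
      simp [hf, mul_comm]
    rw [← h3]
    have h4 : (Fintype.card ↥M : ℂ)⁻¹ * ∑ m : ↥M, T.character m = (d : ℂ) := by
      simpa [invOf_eq_inv, smul_eq_mul] using havg
    field_simp at h4
    linear_combination h4
  -- Step 4: conclude
  have hcard : (Fintype.card ↥N : ℂ) = (Fintype.card ↥M : ℂ) * d := by
    rw [← hN, ← hMN, hM]
  have hnat : Fintype.card ↥N = Fintype.card ↥M * d := by exact_mod_cast hcard
  have hd1 : 1 ≤ d := by
    rcases Nat.eq_zero_or_pos d with h | h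
    · rw [h, mul_zero] at hnat
      exact absurd hnat (Fintype.card_ne_zero)
    · exact h
  have hle : Fintype.card ↥M ≤ Fintype.card ↥N := by
    calc Fintype.card ↥M ≤ Fintype.card ↥M * d := Nat.le_mul_of_pos_right _ hd1
    _ = Fintype.card ↥N := hnat.symm
  exact (Subgroup.eq_of_le_of_card_ge hNM (by simpa [Nat.card_eq_fintype_card] using hle)).symm
end
end

section
/- Let G be a finite group, N a normal subgroup of G, A ≤ G a subgroup, and α ∈ Irr(A). If the induced character α^G is irreducible and its restriction (α^G)_N to N is irreducible, then the restriction α_{A∩N} of α to A ∩ N is irreducible. -/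
open scoped BigOperators Classical Pointwise

noncomputable section

variable {G : Type} [Group G]

namespace Aux8

open Complex LinearMap Module Finset CategoryTheory Representation

section TraceLemma

variable {V : Type} [AddCommGroup V] [Module ℂ V] [FiniteDimensional ℂ V]

lemma trace_conj_of_pow_eq_one (f f' : V →ₗ[ℂ] V) {n : ℕ} (hn : 0 < n)
    (hfn : f ^ n = 1) (hff' : f * f' = 1) :
    (starRingEnd ℂ) (LinearMap.trace ℂ V f) = LinearMap.trace ℂ V f' := by
  classical
  set ζ : ℂ := Complex.exp (2 * Real.pi * Complex.I / n) with hζdef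
  have hζ : IsPrimitiveRoot ζ n := Complex.isPrimitiveRoot_exp n hn.ne'
  have hζn : ζ ^ n = 1 := hζ.pow_eq_one
  have hζ0 : ζ ≠ 0 := by
    intro h; rw [h] at hζn; simp [zero_pow hn.ne'] at hζn
  set lam : ℕ → ℂ := fun j => ζ ^ j with hlam
  have hlam0 : ∀ j, lam j ≠ 0 := fun j => pow_ne_zero _ hζ0
  have hlamn : ∀ j, lam j ^ n = 1 := by
    intro j
    rw [hlam]; dsimp only
    rw [← pow_mul, mul_comm, pow_mul, hζn, one_pow]
  set P : ℕ → (V →ₗ[ℂ] V) := fun j =>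
    (n : ℂ)⁻¹ • ∑ k ∈ range n, ((lam j)⁻¹) ^ k • f ^ k with hP
  have key1 : ∀ j, f * P j = lam j • P j := by
    intro j
    have main : ∑ k ∈ range n, ((lam j)⁻¹) ^ k • f ^ (k + 1)
        = lam j • ∑ k ∈ range n, ((lam j)⁻¹) ^ k • f ^ k := by
      set u : ℕ → (V →ₗ[ℂ] V) := fun k => ((lam j)⁻¹) ^ k • f ^ k with hu
      have step : ∀ k, ((lam j)⁻¹) ^ k • f ^ (k + 1) = lam j • u (k + 1) := by
        intro k
        rw [hu]; dsimp only
        rw [smul_smul]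
        congr 1
        rw [pow_succ', ← mul_assoc, mul_inv_cancel₀ (hlam0 j), one_mul]
      calc ∑ k ∈ range n, ((lam j)⁻¹) ^ k • f ^ (k + 1)
          = ∑ k ∈ range n, lam j • u (k + 1) := Finset.sum_congr rfl fun k _ => step k
        _ = lam j • ∑ k ∈ range n, u (k + 1) := by rw [Finset.smul_sum]
        _ = lam j • ∑ k ∈ range n, u k := by
            congr 1
            have h1 : ∑ k ∈ range (n + 1), u k = (∑ k ∈ range n, u (k + 1)) + u 0 :=
              Finset.sum_range_succ' u n
            have h2 : ∑ k ∈ range (n + 1), u k = (∑ k ∈ range n, u k) + u n :=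
              Finset.sum_range_succ u n
            have hun : u n = u 0 := by
              rw [hu]; dsimp only
              rw [pow_zero, pow_zero, inv_pow, hlamn j, inv_one, hfn]
            rw [hun] at h2
            exact add_right_cancel (h1.symm.trans h2)
    rw [hP]; dsimp only
    rw [mul_smul_comm, Finset.mul_sum]
    simp_rw [mul_smul_comm, ← pow_succ' f]
    rw [main, smul_comm]
  have keypow : ∀ j k, f ^ k * P j = (lam j) ^ k • P j := by
    intro j k
    induction k with
    | zero => simp
    | succ k ih =>
      rw [pow_succ f, mul_assoc, key1 j, mul_smul_comm, ih, smul_smul, ← pow_succ']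
  have hf'f : f' * f = 1 := mul_eq_one_comm.mp hff'
  have key2 : ∀ j, f' * P j = (lam j)⁻¹ • P j := by
    intro j
    have : P j = (lam j)⁻¹ • (f * P j) := by
      rw [key1 j, smul_smul, inv_mul_cancel₀ (hlam0 j), one_smul]
    calc f' * P j = f' * ((lam j)⁻¹ • (f * P j)) := by rw [← this]
      _ = (lam j)⁻¹ • (f' * (f * P j)) := by rw [mul_smul_comm]
      _ = (lam j)⁻¹ • ((f' * f) * P j) := by rw [mul_assoc]
      _ = (lam j)⁻¹ • P j := by rw [hf'f, one_mul]
  have idem : ∀ j, P j * P j = P j := by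
    intro j
    conv_lhs => rw [hP]
    dsimp only
    rw [smul_mul_assoc, Finset.sum_mul]
    have : ∀ k ∈ range n, (((lam j)⁻¹) ^ k • f ^ k) * P j = P j := by
      intro k _
      rw [smul_mul_assoc, keypow j k, smul_smul, inv_pow, inv_mul_cancel₀ (pow_ne_zero _ (hlam0 j)),
        one_smul]
    rw [Finset.sum_congr rfl this, Finset.sum_const, Finset.card_range,
      ← Nat.cast_smul_eq_nsmul ℂ, smul_smul, inv_mul_cancel₀, one_smul]
    exact_mod_cast Nat.cast_ne_zero.mpr hn.ne'
  have sumP : ∑ j ∈ range n, P j = 1 := by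
    rw [hP]; dsimp only
    rw [← Finset.smul_sum, Finset.sum_comm]
    have inner : ∀ k ∈ range n,
        ∑ j ∈ range n, ((lam j)⁻¹) ^ k • f ^ k = (if k = 0 then (n : ℂ) else 0) • f ^ k := by
      intro k hk
      rw [← Finset.sum_smul]
      congr 1
      have hrw : ∀ j, ((lam j)⁻¹) ^ k = ((ζ ^ k)⁻¹) ^ j := by
        intro j
        rw [hlam]; dsimp only
        rw [← inv_pow, ← pow_mul, mul_comm j k, pow_mul, inv_pow]
      rw [Finset.sum_congr rfl fun j _ => hrw j]
      by_cases hk0 : k = 0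
      · subst hk0; simp
      · rw [if_neg hk0]
        have hne : (ζ ^ k)⁻¹ ≠ 1 := by
          rw [ne_eq, inv_eq_one]
          exact hζ.pow_ne_one_of_pos_of_lt hk0 (Finset.mem_range.mp hk)
        rw [geom_sum_eq hne]
        have h3 : ((ζ ^ k)⁻¹) ^ n = 1 := by
          rw [inv_pow, ← pow_mul, mul_comm k n, pow_mul, hζn, one_pow, inv_one]
        rw [h3]
        simp
    rw [Finset.sum_congr rfl inner]
    have : ∀ k ∈ range n, (if k = 0 then (n : ℂ) else 0) • f ^ k
        = if k = 0 then (n : ℂ) • f ^ k else 0 := by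
      intro k _; split <;> simp
    rw [Finset.sum_congr rfl this, Finset.sum_ite_eq' (range n) 0,
      if_pos (Finset.mem_range.mpr hn), pow_zero, smul_smul,
      inv_mul_cancel₀ (by exact_mod_cast hn.ne'), one_smul]
  have traceP : ∀ j, ∃ d : ℕ, LinearMap.trace ℂ V (P j) = (d : ℂ) := by
    intro j
    have hproj : LinearMap.IsProj (LinearMap.range (P j)) (P j) := by
      constructor
      · intro x; exact LinearMap.mem_range_self _ x
      · rintro x ⟨y, rfl⟩
        have := congrArg (fun g => g y) (idem j)
        simpa [Module.End.mul_apply] using this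
    exact ⟨finrank ℂ (LinearMap.range (P j)), hproj.trace⟩
  choose d hd using traceP
  have hf : LinearMap.trace ℂ V f = ∑ j ∈ range n, lam j * (d j : ℂ) := by
    have : f = ∑ j ∈ range n, lam j • P j := by
      calc f = f * 1 := (mul_one f).symm
        _ = f * ∑ j ∈ range n, P j := by rw [sumP]
        _ = ∑ j ∈ range n, f * P j := by rw [Finset.mul_sum]
        _ = ∑ j ∈ range n, lam j • P j := Finset.sum_congr rfl fun j _ => key1 j
    rw [this, map_sum]
    exact Finset.sum_congr rfl fun j _ => by rw [map_smul, hd j]; rfl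
  have hf' : LinearMap.trace ℂ V f' = ∑ j ∈ range n, (lam j)⁻¹ * (d j : ℂ) := by
    have : f' = ∑ j ∈ range n, (lam j)⁻¹ • P j := by
      calc f' = f' * 1 := (mul_one f').symm
        _ = f' * ∑ j ∈ range n, P j := by rw [sumP]
        _ = ∑ j ∈ range n, f' * P j := by rw [Finset.mul_sum]
        _ = ∑ j ∈ range n, (lam j)⁻¹ • P j := Finset.sum_congr rfl fun j _ => key2 j
    rw [this, map_sum]
    exact Finset.sum_congr rfl fun j _ => by rw [map_smul, hd j]; rfl
  rw [hf, hf', map_sum]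
  refine Finset.sum_congr rfl fun j _ => ?_
  rw [map_mul]
  have h1 : (starRingEnd ℂ) (d j : ℂ) = (d j : ℂ) := by
    simp
  have h2 : (starRingEnd ℂ) (lam j) = (lam j)⁻¹ := by
    have hnorm : ‖lam j‖ = 1 := by
      have hpow : ‖lam j‖ ^ n = 1 := by rw [← norm_pow, hlamn j, norm_one]
      have h0 : (0:ℝ) ≤ ‖lam j‖ := norm_nonneg _
      by_contra hne1
      rcases lt_or_gt_of_ne hne1 with hlt | hgt
      · have := pow_lt_one₀ h0 hlt hn.ne'; rw [hpow] at this; exact lt_irrefl _ this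
      · have := one_lt_pow₀ hgt hn.ne'; rw [hpow] at this; exact lt_irrefl _ this
    rw [← RCLike.inv_eq_conj hnorm]
  rw [h1, h2]


end TraceLemma

section CharLemmas

variable {H : Type} [Group H] [Fintype H]

lemma char_conj_apply (X : FDRep ℂ H) (h : H) :
    (starRingEnd ℂ) (X.character h) = X.character h⁻¹ := by
  show (starRingEnd ℂ) (LinearMap.trace ℂ X (X.ρ h)) = LinearMap.trace ℂ X (X.ρ h⁻¹)
  apply trace_conj_of_pow_eq_one (X.ρ h) (X.ρ h⁻¹) (n := Fintype.card H)
    (Fintype.card_pos_iff.mpr ⟨(1 : H)⟩)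
  · rw [← map_pow, pow_card_eq_one, map_one]
  · rw [← map_mul, mul_inv_cancel, map_one]

lemma charInner_eq_finrank_hom (V W : FDRep ℂ H) :
    charInner H V.character W.character = (finrank ℂ (W ⟶ V) : ℂ) := by
  haveI : Invertible (Fintype.card H : ℂ) :=
    invertibleOfNonzero (Nat.cast_ne_zero.mpr Fintype.card_ne_zero)
  have step1 : charInner H V.character W.character
      = ⅟(Fintype.card H : ℂ) • ∑ h : H, (FDRep.of (linHom W.ρ V.ρ)).character h := by
    rw [charInner, invOf_eq_inv (Fintype.card H : ℂ), smul_eq_mul]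
    congr 1
    refine Finset.sum_congr rfl fun h _ => ?_
    rw [char_conj_apply, FDRep.char_linHom, mul_comm]
  rw [step1, invOf_eq_inv, smul_eq_mul, ← Nat.card_eq_fintype_card, FDRep.average_char_eq_finrank_invariants]
  rw [show (FDRep.of (linHom W.ρ V.ρ)).ρ = linHom W.ρ V.ρ from FDRep.of_ρ' (linHom W.ρ V.ρ)]
  norm_cast
  exact (linHom.invariantsEquivFDRepHom (G := H) W V).finrank_eq


lemma hom_injective_of_mono {Y W : FDRep ℂ H} (f : Y ⟶ W) [Mono f] :
    Function.Injective f.hom := by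
  rw [← LinearMap.ker_eq_bot]
  by_contra hker
  obtain ⟨x₀, hx₀mem, hx₀⟩ := Submodule.exists_mem_ne_zero_of_ne_bot hker
  set K : Submodule ℂ Y := LinearMap.ker f.hom.hom.hom with hK
  have hinv : ∀ (g : H), ∀ x ∈ K, Y.ρ g x ∈ K := by
    intro g x hx
    have h2 : f.hom (Y.ρ g x) = W.ρ g (f.hom x) :=
      congrArg (fun (u : Y.V ⟶ W.V) => u x) (f.comm g)
    have hx' : f.hom x = 0 := hx
    show f.hom (Y.ρ g x) = 0
    rw [h2, hx', map_zero]
  set ρK : Representation ℂ H K :=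
    { toFun := fun g => (Y.ρ g).restrict (fun x hx => hinv g x hx)
      map_one' := by ext x; simp
      map_mul' := by intro g h; ext x; simp } with hρK
  set Krep : FDRep ℂ H := FDRep.of ρK with hKrep
  set ι : Krep ⟶ Y := ⟨ConcreteCategory.ofHom K.subtype, fun g => rfl⟩ with hι
  have hcomp : f.hom.hom.hom.comp K.subtype = 0 := by
    apply LinearMap.ext; rintro ⟨x, hx⟩
    exact hx
  have hι0 : ι ≫ f = (0 : Krep ⟶ Y) ≫ f := by
    rw [Limits.zero_comp]
    apply Action.Hom.ext
    apply FGModuleCat.hom_ext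
    exact hcomp
  have hcancel := Mono.right_cancellation (f := f) _ _ hι0
  have happ := congrArg (fun (u : Krep ⟶ Y) => u.hom ⟨x₀, hx₀mem⟩) hcancel
  have : x₀ = (0 : Y.V) := by
    exact happ
  exact hx₀ this

lemma simple_of_finrank_end_eq_one (W : FDRep ℂ H) (hnt : 𝟙 W ≠ 0)
    (h1 : finrank ℂ (W ⟶ W) = 1) : CategoryTheory.Simple W := by
  constructor
  intro Y f hmono
  constructor
  · intro hiso hf0
    apply hnt
    have h2 : inv f ≫ f = 𝟙 W := by simp
    have h3 := congrArg (fun (u : Y ⟶ W) => inv f ≫ u) hf0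
    simp only [h2] at h3
    rw [h3, Limits.comp_zero]
  · intro hf0
    have hinj : Function.Injective f.hom := hom_injective_of_mono f
    obtain ⟨π, hπ⟩ := LinearMap.exists_leftInverse_of_injective f.hom.hom.hom
      (LinearMap.ker_eq_bot.mpr hinj)
    have requiv : ∀ h : H,
        ((Fintype.card H : ℂ)⁻¹ • ∑ g : H, ((Y.ρ g⁻¹) ∘ₗ π ∘ₗ (W.ρ g))) ∘ₗ
          (W.ρ h : (W : Type) →ₗ[ℂ] (W : Type))
        = (Y.ρ h : (Y : Type) →ₗ[ℂ] (Y : Type)) ∘ₗ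
          ((Fintype.card H : ℂ)⁻¹ • ∑ g : H, ((Y.ρ g⁻¹) ∘ₗ π ∘ₗ (W.ρ g))) := by
      intro h
      apply LinearMap.ext
      intro x
      simp only [LinearMap.comp_apply, LinearMap.smul_apply, LinearMap.sum_apply,
        map_smul, map_sum]
      congr 1
      refine Fintype.sum_equiv (Equiv.mulRight h) _ _ ?_
      intro g
      simp only [Equiv.coe_mulRight, LinearMap.comp_apply]
      show (Y.ρ g⁻¹) (π (W.ρ g (W.ρ h x))) = (Y.ρ h) ((Y.ρ (g*h)⁻¹) (π (W.ρ (g*h) x)))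
      have e1 : W.ρ g (W.ρ h x) = W.ρ (g * h) x := by
        rw [← Module.End.mul_apply, ← map_mul]
      rw [e1, ← Module.End.mul_apply (Y.ρ h), ← map_mul, mul_inv_rev, mul_inv_cancel_left]
    have rsplit : ∀ x : (Y : Type),
        ((Fintype.card H : ℂ)⁻¹ • ∑ g : H, ((Y.ρ g⁻¹) ∘ₗ π ∘ₗ (W.ρ g))) (f.hom x) = x := by
      intro x
      simp only [LinearMap.smul_apply, LinearMap.sum_apply, LinearMap.comp_apply]
      have term : ∀ g : H, Y.ρ g⁻¹ (π (W.ρ g (f.hom x))) = x := by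
        intro g
        have hc : f.hom (Y.ρ g x) = W.ρ g (f.hom x) :=
          congrArg (fun (u : Y.V ⟶ W.V) => u x) (f.comm g)
        rw [← hc]
        have hπx : π (f.hom (Y.ρ g x)) = Y.ρ g x :=
          congrArg (fun (u : (Y:Type) →ₗ[ℂ] (Y:Type)) => u (Y.ρ g x)) hπ
        rw [hπx, ← Module.End.mul_apply, ← map_mul, inv_mul_cancel, map_one,
          Module.End.one_apply]
      show (Fintype.card H : ℂ)⁻¹ • ∑ g : H, Y.ρ g⁻¹ (π (W.ρ g (f.hom x))) = x
      rw [Finset.sum_congr rfl fun g _ => term g, Finset.sum_const, Finset.card_univ,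
        ← Nat.cast_smul_eq_nsmul ℂ, smul_smul,
        inv_mul_cancel₀ (Nat.cast_ne_zero.mpr Fintype.card_ne_zero), one_smul]
    set R : W ⟶ Y :=
      ⟨ConcreteCategory.ofHom ((Fintype.card H : ℂ)⁻¹ • ∑ g : H, ((Y.ρ g⁻¹) ∘ₗ π ∘ₗ (W.ρ g))),
        fun h => by apply FGModuleCat.hom_ext; exact requiv h⟩ with hR
    have hfR : f ≫ R = 𝟙 Y := by
      apply Action.Hom.ext
      rw [Action.comp_hom, Action.id_hom]
      apply FGModuleCat.hom_ext
      apply LinearMap.ext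
      intro x
      exact rsplit x
    set e : W ⟶ W := R ≫ f with he
    obtain ⟨c, hc⟩ := (finrank_eq_one_iff_of_nonzero' (𝟙 W) hnt).mp h1 e
    have hfe : f ≫ e = f := by
      rw [he, ← Category.assoc, hfR, Category.id_comp]
    have hcf : c • f = f := by
      have h4 := hfe
      rw [← hc] at h4
      simpa using h4
    have hc1 : c = 1 := by
      by_contra hcne
      have hzero : (c - 1) • f = 0 := by
        rw [sub_smul, one_smul, hcf, sub_self]
      rcases smul_eq_zero.mp hzero with h | h
      · exact hcne (sub_eq_zero.mp h)
      · exact hf0 h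
    have hRf : R ≫ f = 𝟙 W := by rw [← he, ← hc, hc1, one_smul]
    exact ⟨⟨R, hfR, hRf⟩⟩


end CharLemmas

section SumLemmas

variable {G : Type} [Group G] [Fintype G]

def aFun (A : Subgroup G) (α : ↥A → ℂ) : G → ℂ := fun g => if h : g ∈ A then α ⟨g, h⟩ else 0

lemma sum_subtype_eq (K : Subgroup G) (F : G → ℂ) :
    ∑ x : ↥K, F ↑x = ∑ g : G, if g ∈ K then F g else 0 := by
  rw [← Finset.sum_filter]
  exact (Finset.sum_subtype (p := fun g => g ∈ K) (Finset.univ.filter (· ∈ K)) (by simp) F).symm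

lemma indG_eq (A : Subgroup G) (α : ↥A → ℂ) (g : G) :
    indG A α g = (Fintype.card ↥A : ℂ)⁻¹ * ∑ x : G, aFun A α (x * g * x⁻¹) := rfl

lemma conj_indG (A : Subgroup G) (α : ↥A → ℂ) (g : G) :
    (starRingEnd ℂ) (indG A α g)
      = (Fintype.card ↥A : ℂ)⁻¹ * ∑ x : G, (starRingEnd ℂ) (aFun A α (x * g * x⁻¹)) := by
  rw [indG_eq, map_mul, map_sum]
  congr 1
  simp

lemma keyE (N A : Subgroup G) [N.Normal] (α : ↥A → ℂ) :
    charInner ↥N (fun n : ↥N => indG A α ↑n) (fun n : ↥N => indG A α ↑n)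
    = (Fintype.card ↥N : ℂ)⁻¹ * ((Fintype.card ↥A : ℂ)⁻¹ * ((Fintype.card ↥A : ℂ)⁻¹ *
        ((Fintype.card G : ℂ) * ∑ t : G, ∑ m : G,
          if m ∈ N then (aFun A α m) * (starRingEnd ℂ) (aFun A α (t * m * t⁻¹)) else 0))) := by
  have hmemconj : ∀ (x g : G), x * g * x⁻¹ ∈ N ↔ g ∈ N := by
    intro x g
    constructor
    · intro h
      have := Subgroup.Normal.conj_mem ‹N.Normal› _ h x⁻¹
      simpa [mul_assoc] using this
    · intro h
      exact Subgroup.Normal.conj_mem ‹N.Normal› _ h x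
  rw [charInner]
  congr 1
  calc ∑ n : ↥N, (indG A α ↑n) * (starRingEnd ℂ) (indG A α ↑n)
      = ∑ g : G, if g ∈ N then (indG A α g) * (starRingEnd ℂ) (indG A α g) else 0 :=
        sum_subtype_eq N (fun g => indG A α g * (starRingEnd ℂ) (indG A α g))
    _ = ∑ g : G, (Fintype.card ↥A : ℂ)⁻¹ * ((Fintype.card ↥A : ℂ)⁻¹ *
          (if g ∈ N then (∑ x : G, aFun A α (x * g * x⁻¹)) *
            (∑ y : G, (starRingEnd ℂ) (aFun A α (y * g * y⁻¹))) else 0)) := by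
        refine Finset.sum_congr rfl fun g _ => ?_
        by_cases hg : g ∈ N
        · rw [if_pos hg, if_pos hg, conj_indG, indG_eq]
          ring
        · rw [if_neg hg, if_neg hg]
          ring
    _ = (Fintype.card ↥A : ℂ)⁻¹ * ((Fintype.card ↥A : ℂ)⁻¹ *
          ∑ g : G, (if g ∈ N then (∑ x : G, aFun A α (x * g * x⁻¹)) *
            (∑ y : G, (starRingEnd ℂ) (aFun A α (y * g * y⁻¹))) else 0)) := by
        rw [← Finset.mul_sum, ← Finset.mul_sum]
    _ = (Fintype.card ↥A : ℂ)⁻¹ * ((Fintype.card ↥A : ℂ)⁻¹ *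
          ((Fintype.card G : ℂ) * ∑ t : G, ∑ m : G,
            if m ∈ N then (aFun A α m) * (starRingEnd ℂ) (aFun A α (t * m * t⁻¹)) else 0)) := by
        congr 2
        calc ∑ g : G, (if g ∈ N then (∑ x : G, aFun A α (x * g * x⁻¹)) *
              (∑ y : G, (starRingEnd ℂ) (aFun A α (y * g * y⁻¹))) else 0)
            = ∑ g : G, ∑ x : G, ∑ y : G,
                (if g ∈ N then aFun A α (x * g * x⁻¹) *
                  (starRingEnd ℂ) (aFun A α (y * g * y⁻¹)) else 0) := by
              refine Finset.sum_congr rfl fun g _ => ?_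
              by_cases hg : g ∈ N
              · simp only [if_pos hg]
                rw [Finset.sum_mul_sum]
              · simp only [if_neg hg, Finset.sum_const_zero]
          _ = ∑ x : G, ∑ g : G, ∑ y : G,
                (if g ∈ N then aFun A α (x * g * x⁻¹) *
                  (starRingEnd ℂ) (aFun A α (y * g * y⁻¹)) else 0) := Finset.sum_comm
          _ = ∑ x : G, ∑ t : G, ∑ m : G,
                (if m ∈ N then aFun A α m *
                  (starRingEnd ℂ) (aFun A α (t * m * t⁻¹)) else 0) := by
              refine Finset.sum_congr rfl fun x _ => ?_
              calc ∑ g : G, ∑ y : G,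
                    (if g ∈ N then aFun A α (x * g * x⁻¹) *
                      (starRingEnd ℂ) (aFun A α (y * g * y⁻¹)) else 0)
                  = ∑ g : G, ∑ t : G,
                    (if g ∈ N then aFun A α (x * g * x⁻¹) *
                      (starRingEnd ℂ) (aFun A α (t * (x * g * x⁻¹) * t⁻¹)) else 0) := by
                    refine Finset.sum_congr rfl fun g _ => ?_
                    refine Fintype.sum_equiv (Equiv.mulRight x⁻¹) _ _ fun y => ?_
                    simp only [Equiv.coe_mulRight]
                    have harg : (y * x⁻¹) * (x * g * x⁻¹) * (y * x⁻¹)⁻¹ = y * g * y⁻¹ := by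
                      group
                    rw [harg]
                  _ = ∑ t : G, ∑ g : G,
                    (if g ∈ N then aFun A α (x * g * x⁻¹) *
                      (starRingEnd ℂ) (aFun A α (t * (x * g * x⁻¹) * t⁻¹)) else 0) :=
                    Finset.sum_comm
                  _ = ∑ t : G, ∑ m : G,
                    (if m ∈ N then aFun A α m *
                      (starRingEnd ℂ) (aFun A α (t * m * t⁻¹)) else 0) := by
                    refine Finset.sum_congr rfl fun t _ => ?_
                    refine Fintype.sum_equiv (MulAut.conj x).toEquiv _ _ fun m => ?_
                    show (if m ∈ N then aFun A α (x * m * x⁻¹) *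
                        (starRingEnd ℂ) (aFun A α (t * (x * m * x⁻¹) * t⁻¹)) else 0)
                      = (if x * m * x⁻¹ ∈ N then aFun A α (x * m * x⁻¹) *
                        (starRingEnd ℂ) (aFun A α (t * (x * m * x⁻¹) * t⁻¹)) else 0)
                    rw [hmemconj x m]
          _ = (Fintype.card G : ℂ) * ∑ t : G, ∑ m : G,
                (if m ∈ N then aFun A α m *
                  (starRingEnd ℂ) (aFun A α (t * m * t⁻¹)) else 0) := by
              rw [Finset.sum_const, Finset.card_univ, nsmul_eq_mul]


lemma T_pos (N A : Subgroup G) [hN : N.Normal] (Vα : FDRep ℂ ↥A) (t : G) :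
    ∃ k : ℕ, ∑ m : G, (if m ∈ N then aFun A Vα.character m *
      (starRingEnd ℂ) (aFun A Vα.character (t * m * t⁻¹)) else 0) = (k : ℂ) := by
  set α := Vα.character with hα
  set Kt : Subgroup G := (A ⊓ N) ⊓ Subgroup.comap ((MulAut.conj t).toMonoidHom) (A ⊓ N) with hKt
  have hmem : ∀ m : G, m ∈ Kt ↔ (m ∈ A ∧ m ∈ N) ∧ (t * m * t⁻¹ ∈ A ∧ t * m * t⁻¹ ∈ N) := by
    intro m
    rw [hKt, Subgroup.mem_inf, Subgroup.mem_inf, Subgroup.mem_comap, Subgroup.mem_inf]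
    rfl
  have h1 : Kt ≤ A := fun x hx => ((hmem x).mp hx).1.1
  set φ1 : ↥Kt →* ↥A := Subgroup.inclusion h1 with hφ1
  set φ2 : ↥Kt →* ↥A :=
    { toFun := fun x => ⟨t * ↑x * t⁻¹, ((hmem ↑x).mp x.2).2.1⟩
      map_one' := by ext; simp
      map_mul' := by intro x y; ext; show t * ((x:G) * y) * t⁻¹ = t * x * t⁻¹ * (t * y * t⁻¹); group } with hφ2
  set W1 : FDRep ℂ ↥Kt := FDRep.of (Vα.ρ.comp φ1) with hW1
  set W2 : FDRep ℂ ↥Kt := FDRep.of (Vα.ρ.comp φ2) with hW2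
  have hc1 : ∀ x : ↥Kt, W1.character x = α (φ1 x) := fun x => rfl
  have hc2 : ∀ x : ↥Kt, W2.character x = α (φ2 x) := fun x => rfl
  have hpoint : ∀ m : G, (if m ∈ N then aFun A α m *
      (starRingEnd ℂ) (aFun A α (t * m * t⁻¹)) else 0)
      = (if m ∈ Kt then aFun A α m * (starRingEnd ℂ) (aFun A α (t * m * t⁻¹)) else 0) := by
    intro m
    by_cases hk : m ∈ Kt
    · rw [if_pos hk, if_pos ((hmem m).mp hk).1.2]
    · rw [if_neg hk]
      by_cases hmN : m ∈ N
      · rw [if_pos hmN]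
        by_cases hmA : m ∈ A
        · have htm : ¬ (t * m * t⁻¹ ∈ A) := by
            intro hcon
            exact hk ((hmem m).mpr ⟨⟨hmA, hmN⟩, ⟨hcon, hN.conj_mem m hmN t⟩⟩)
          simp only [aFun]
          rw [dif_neg htm]
          simp
        · simp only [aFun]
          rw [dif_neg hmA]
          simp
      · rw [if_neg hmN]
  have step1 : ∑ m : G, (if m ∈ N then aFun A α m *
      (starRingEnd ℂ) (aFun A α (t * m * t⁻¹)) else 0)
      = ∑ x : ↥Kt, W1.character x * (starRingEnd ℂ) (W2.character x) := by
    rw [Finset.sum_congr rfl fun m _ => hpoint m,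
      ← sum_subtype_eq Kt (fun m => aFun A α m * (starRingEnd ℂ) (aFun A α (t * m * t⁻¹)))]
    refine Finset.sum_congr rfl fun x _ => ?_
    rw [hc1, hc2]
    congr 1
    · simp only [aFun]
      rw [dif_pos (h1 x.2)]
      rfl
    · simp only [aFun]
      rw [dif_pos (((hmem ↑x).mp x.2).2.1)]
      rfl
  refine ⟨Fintype.card ↥Kt * finrank ℂ (W2 ⟶ W1), ?_⟩
  rw [step1]
  have : ∑ x : ↥Kt, W1.character x * (starRingEnd ℂ) (W2.character x)
      = (Fintype.card ↥Kt : ℂ) * charInner ↥Kt W1.character W2.character := by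
    rw [charInner, ← mul_assoc, mul_inv_cancel₀ (Nat.cast_ne_zero.mpr Fintype.card_ne_zero),
      one_mul]
  rw [this, charInner_eq_finrank_hom, Nat.cast_mul]

lemma T_A (N A : Subgroup G) [hN : N.Normal] (Vα : FDRep ℂ ↥A) {t : G} (ht : t ∈ A) :
    ∑ m : G, (if m ∈ N then aFun A Vα.character m *
      (starRingEnd ℂ) (aFun A Vα.character (t * m * t⁻¹)) else 0)
    = (Fintype.card ↥(A ⊓ N) : ℂ) * charInner ↥(A ⊓ N)
        (resSub (inf_le_left : A ⊓ N ≤ A) Vα.character)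
        (resSub (inf_le_left : A ⊓ N ≤ A) Vα.character) := by
  set α := Vα.character with hα
  have hpoint : ∀ m : G, (if m ∈ N then aFun A α m *
      (starRingEnd ℂ) (aFun A α (t * m * t⁻¹)) else 0)
      = (if m ∈ A ⊓ N then aFun A α m * (starRingEnd ℂ) (aFun A α m) else 0) := by
    intro m
    by_cases hm : m ∈ A ⊓ N
    · obtain ⟨hmA, hmN⟩ := Subgroup.mem_inf.mp hm
      rw [if_pos hm, if_pos hmN]
      have htmA : t * m * t⁻¹ ∈ A := A.mul_mem (A.mul_mem ht hmA) (A.inv_mem ht)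
      have key : aFun A α (t * m * t⁻¹) = aFun A α m := by
        simp only [aFun]
        rw [dif_pos htmA, dif_pos hmA]
        have hsub : (⟨t * m * t⁻¹, htmA⟩ : ↥A) = ⟨t, ht⟩ * ⟨m, hmA⟩ * (⟨t, ht⟩)⁻¹ := by
          ext; rfl
        rw [hsub, hα]
        exact FDRep.char_conj Vα _ _
      rw [key]
    · rw [if_neg hm]
      by_cases hmN : m ∈ N
      · rw [if_pos hmN]
        have hmA : ¬ m ∈ A := fun hmA => hm (Subgroup.mem_inf.mpr ⟨hmA, hmN⟩)
        simp only [aFun]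
        rw [dif_neg hmA]
        simp
      · rw [if_neg hmN]
  rw [Finset.sum_congr rfl fun m _ => hpoint m,
    ← sum_subtype_eq (A ⊓ N) (fun m => aFun A α m * (starRingEnd ℂ) (aFun A α m))]
  have : ∀ x : ↥(A ⊓ N), aFun A α ↑x = resSub (inf_le_left : A ⊓ N ≤ A) α x := by
    intro x
    simp only [aFun]
    have hxA : (x : G) ∈ A := (Subgroup.mem_inf.mp x.2).1
    rw [dif_pos hxA]
    rfl
  rw [Finset.sum_congr rfl fun x _ => by rw [this x]]
  rw [charInner, ← mul_assoc, mul_inv_cancel₀ (Nat.cast_ne_zero.mpr Fintype.card_ne_zero),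
    one_mul]

lemma cardineq (N A : Subgroup G) [N.Normal] :
    Fintype.card ↥N * Fintype.card ↥A ≤ Fintype.card G * Fintype.card ↥(A ⊓ N) := by
  have h1 : N.relIndex A * Nat.card ↥(N ⊓ A) = Nat.card ↥A := by
    have := Subgroup.index_mul_card (N.subgroupOf A)
    rwa [show Nat.card ↥(N.subgroupOf A) = Nat.card ↥(N ⊓ A) from ?_] at this
    rw [← Subgroup.inf_subgroupOf_right]
    exact Nat.card_congr (Subgroup.subgroupOfEquivOfLe inf_le_right).toEquiv
  have h2 : N.index * Nat.card ↥N = Nat.card G := Subgroup.index_mul_card N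
  have h3 : N.relIndex A ≤ N.index :=
    Nat.le_of_dvd (Nat.pos_of_ne_zero (Subgroup.index_ne_zero_of_finite))
      (Subgroup.relIndex_dvd_index_of_normal N A)
  have h4 : Nat.card ↥(N ⊓ A) = Nat.card ↥(A ⊓ N) := by rw [inf_comm]
  calc Fintype.card ↥N * Fintype.card ↥A
      = Nat.card ↥N * (N.relIndex A * Nat.card ↥(A ⊓ N)) := by
        rw [← h4, h1, Nat.card_eq_fintype_card, Nat.card_eq_fintype_card]
    _ ≤ Nat.card ↥N * (N.index * Nat.card ↥(A ⊓ N)) := by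
        exact Nat.mul_le_mul_left _ (Nat.mul_le_mul_right _ h3)
    _ = (N.index * Nat.card ↥N) * Nat.card ↥(A ⊓ N) := by ring
    _ = Fintype.card G * Fintype.card ↥(A ⊓ N) := by
        rw [h2, Nat.card_eq_fintype_card, Nat.card_eq_fintype_card]


end SumLemmas

end Aux8

open Aux8 Module CategoryTheory in
/-- If `N ◁ G`, `A ≤ G`, `α ∈ Irr(A)`, `α^G` is irreducible and `(α^G)_N` is irreducible,
then `α_{A ∩ N}` is irreducible. -/
theorem statement8 {G : Type} [Group G] [Fintype G] (N : Subgroup G) [N.Normal]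
    (A : Subgroup G) (α : ↥A → ℂ) (hα : IsIrrChar ↥A α)
    (hind : IsIrrChar G (indG A α))
    (hres : IsIrrChar ↥N fun n : ↥N => indG A α ↑n) :
    IsIrrChar ↥(A ⊓ N) (resSub (inf_le_left : A ⊓ N ≤ A) α) := by
  classical
  obtain ⟨Vα, hVsimple, hVchar⟩ := hα
  subst hVchar
  obtain ⟨Y, hYsimple, hYchar⟩ := hres
  set nN := Fintype.card ↥N with hnN
  set nA := Fintype.card ↥A with hnA
  set nG := Fintype.card G with hnG
  set nH := Fintype.card ↥(A ⊓ N) with hnH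
  -- the restricted representation
  set φres : ↥(A ⊓ N) →* ↥A := Subgroup.inclusion inf_le_left with hφres
  set Wres : FDRep ℂ ↥(A ⊓ N) := FDRep.of (Vα.ρ.comp φres) with hWres
  have hθ : Wres.character = resSub (inf_le_left : A ⊓ N ≤ A) Vα.character := by
    funext c; rfl
  set e := finrank ℂ (Wres ⟶ Wres) with he
  have hSe : charInner ↥(A ⊓ N) (resSub (inf_le_left : A ⊓ N ≤ A) Vα.character)
      (resSub (inf_le_left : A ⊓ N ≤ A) Vα.character) = (e : ℂ) := by
    rw [← hθ]; exact charInner_eq_finrank_hom Wres Wres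
  -- nontriviality
  have hVnt : ∃ v : Vα, v ≠ 0 := by
    by_contra hv
    push_neg at hv
    have hid : 𝟙 Vα = 0 := by
      apply Action.Hom.ext
      rw [Action.id_hom, Action.zero_hom]
      apply FGModuleCat.hom_ext; apply LinearMap.ext
      intro x
      simpa using hv x
    exact CategoryTheory.id_nonzero Vα hid
  have hWid : 𝟙 Wres ≠ 0 := by
    intro h0
    obtain ⟨v, hv⟩ := hVnt
    have happ := congrArg (fun (u : Wres ⟶ Wres) => u.hom v) h0
    simp only [Action.id_hom, Action.zero_hom] at happ
    exact hv happ
  have he1 : 1 ≤ e := by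
    have : Nontrivial (Wres ⟶ Wres) := ⟨𝟙 Wres, 0, hWid⟩
    exact Module.finrank_pos
  -- inner product of the restriction of the induced character to N is 1
  have hINN : charInner ↥N (fun n : ↥N => indG A Vα.character ↑n)
      (fun n : ↥N => indG A Vα.character ↑n) = 1 := by
    rw [← hYchar, charInner_eq_finrank_hom Y Y, FDRep.finrank_hom_simple_simple Y Y,
      if_pos ⟨Iso.refl Y⟩]
    norm_num
  -- the key equation
  choose k hk using fun t => T_pos N A Vα t
  set K := ∑ t : G, k t with hK
  have hE := keyE N A Vα.character
  rw [hINN] at hE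
  have hsumK : ∑ t : G, ∑ m : G,
      (if m ∈ N then aFun A Vα.character m *
        (starRingEnd ℂ) (aFun A Vα.character (t * m * t⁻¹)) else 0) = (K : ℂ) := by
    rw [Finset.sum_congr rfl fun t _ => hk t, hK]
    push_cast
    rfl
  rw [hsumK] at hE
  -- cast to a Nat equation
  have hNatEq : nN * nA * nA = nG * K := by
    have hnN0 : (nN : ℂ) ≠ 0 := Nat.cast_ne_zero.mpr Fintype.card_ne_zero
    have hnA0 : (nA : ℂ) ≠ 0 := Nat.cast_ne_zero.mpr Fintype.card_ne_zero
    have : (nN : ℂ) * nA * nA = nG * K := by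
      field_simp at hE
      linear_combination hE
    exact_mod_cast this
  -- values on A
  have hkA : ∀ t, t ∈ A → k t = nH * e := by
    intro t ht
    have h1 := hk t
    rw [T_A N A Vα ht, hSe] at h1
    exact_mod_cast h1.symm
  -- lower bound on K
  have hKge : nA * (nH * e) ≤ K := by
    have hle : ∑ t : G, (if t ∈ A then nH * e else 0) ≤ ∑ t : G, k t := by
      refine Finset.sum_le_sum fun t _ => ?_
      by_cases ht : t ∈ A
      · rw [if_pos ht, hkA t ht]
      · rw [if_neg ht]; exact Nat.zero_le _
    have hcount : ∑ t : G, (if t ∈ A then nH * e else 0) = nA * (nH * e) := by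
      rw [← Finset.sum_filter, Finset.sum_const, smul_eq_mul]
      congr 1
      rw [hnA]
      exact (Fintype.card_subtype _).symm
    rw [← hcount, hK]
    exact hle
  -- conclude e = 1
  have hPpos : 0 < nN * nA * nA :=
    Nat.mul_pos (Nat.mul_pos Fintype.card_pos Fintype.card_pos) Fintype.card_pos
  have hchain : e * (nN * nA * nA) ≤ 1 * (nN * nA * nA) := by
    have c1 : nG * (nA * (nH * e)) ≤ nG * K := Nat.mul_le_mul_left _ hKge
    have c2 : (nN * nA) * (nA * e) ≤ (nG * nH) * (nA * e) :=
      Nat.mul_le_mul_right _ (cardineq N A)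
    calc e * (nN * nA * nA) = (nN * nA) * (nA * e) := by ring
      _ ≤ (nG * nH) * (nA * e) := c2
      _ = nG * (nA * (nH * e)) := by ring
      _ ≤ nG * K := c1
      _ = nN * nA * nA := hNatEq.symm
      _ = 1 * (nN * nA * nA) := (one_mul _).symm
  have he_le : e ≤ 1 := Nat.le_of_mul_le_mul_right hchain hPpos
  have heq : e = 1 := le_antisymm he_le he1
  exact ⟨Wres, simple_of_finrank_end_eq_one Wres hWid heq, hθ⟩
end
end

section
/- Let G be a finite group, N a normal subgroup of G, χ ∈ Irr(G), and let (A, α) be a character pair in G with α^G = χ. Regard A as a group with normal subgroup A ∩ N. Then every vertex of the graph C_{A∩N}(α) (formed inside the group A) is a vertex of C_N(χ), and every edge of C_{A∩N}(α) is an edge of C_N(χ); consequently, any two character pairs connected in C_{A∩N}(α) are connected in C_N(χ). -/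
open scoped BigOperators Classical Pointwise

noncomputable section

variable {G : Type} [Group G]

open CategoryTheory

/-- Restriction along a group isomorphism gives an equivalence of representation categories. -/
def resEquivAux {H K : Type} [Group H] [Group K] (φ : H ≃* K) :
    FDRep ℂ K ≌ FDRep ℂ H :=
  CategoryTheory.Equivalence.mk
    (Action.res _ φ.toMonoidHom)
    (Action.res _ φ.symm.toMonoidHom)
    ((Action.resId _).symm ≪≫ eqToIso (by congr 1; ext x; simp) ≪≫ (Action.resComp _ _ _).symm)
    ((Action.resComp _ _ _) ≪≫ eqToIso (by congr 1; ext x; simp) ≪≫ (Action.resId _))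

lemma res_map_zero_iff {H K : Type} [Group H] [Group K] (ψ : H →* K)
    {X Y : FDRep ℂ K} (f : X ⟶ Y) :
    (Action.res (FGModuleCat ℂ) ψ).map f = 0 ↔ f = 0 := by
  constructor <;> intro h
  · have hh : ((Action.res (FGModuleCat ℂ) ψ).map f).hom = f.hom := rfl
    rw [h, Action.zero_hom] at hh
    exact Action.Hom.ext hh.symm
  · subst h
    exact Action.Hom.ext rfl

lemma simple_res {H K : Type} [Group H] [Group K] (φ : H ≃* K) (V : FDRep ℂ K)
    (hV : Simple V) : Simple ((resEquivAux φ).functor.obj V) := by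
  set E := resEquivAux φ with hE
  constructor
  intro Y f hm
  set g0 : E.inverse.obj Y ⟶ E.inverse.obj (E.functor.obj V) := E.inverse.map f with hg0
  set i : E.inverse.obj (E.functor.obj V) ≅ V := (E.unitIso.app V).symm with hi
  haveI : Mono g0 := E.inverse.map_mono f
  haveI : Mono (g0 ≫ i.hom) := mono_comp _ _
  have key := hV.mono_isIso_iff_nonzero (g0 ≫ i.hom)
  have hzero : f = 0 ↔ g0 ≫ i.hom = 0 := by
    constructor
    · intro h; subst h
      have : g0 = 0 := (res_map_zero_iff _ _).mpr rfl
      rw [this, Limits.zero_comp]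
    · intro h
      have h2 : g0 = 0 := by
        have := congrArg (fun t => t ≫ i.inv) h
        simpa using this
      exact (res_map_zero_iff _ _).mp h2
  constructor
  · intro hf h0
    haveI : IsIso g0 := by rw [hg0]; infer_instance
    haveI : IsIso (g0 ≫ i.hom) := inferInstance
    exact (key.mp inferInstance) (hzero.mp h0)
  · intro hf
    haveI : IsIso (g0 ≫ i.hom) := key.mpr (fun h => hf (hzero.mpr h))
    have hg0iso : IsIso g0 := by
      have : g0 = (g0 ≫ i.hom) ≫ i.inv := by simp
      rw [this]; infer_instance
    rw [hg0] at hg0iso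
    exact isIso_of_reflects_iso f E.inverse

lemma isIrrChar_comp {H K : Type} [Group H] [Group K] (φ : H ≃* K) (f : K → ℂ)
    (hf : IsIrrChar K f) : IsIrrChar H (fun h => f (φ h)) := by
  obtain ⟨V, hV, hchar⟩ := hf
  refine ⟨(resEquivAux φ).functor.obj V, simple_res φ V hV, ?_⟩
  subst hchar
  funext h
  rfl

/-- The multiplicative isomorphism between a subgroup of `↥A` and its image in `G`. -/
def subIso (A : Subgroup G) (B : Subgroup ↥A) : ↥B ≃* ↥(B.map A.subtype) :=
  B.equivMapOfInjective A.subtype A.subtype_injective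

lemma mem_mapSub {A : Subgroup G} {B : Subgroup ↥A} (y : ↥A) :
    (y : G) ∈ B.map A.subtype ↔ y ∈ B :=
  Subgroup.mem_map_iff_mem A.subtype_injective

lemma coe_subIso {A : Subgroup G} {B : Subgroup ↥A} (y : ↥B) :
    ((subIso A B y : G)) = ((y : ↥A) : G) :=
  Subgroup.coe_equivMapOfInjective_apply _ _ _ _

lemma subIso_symm_mk {A : Subgroup G} {B : Subgroup ↥A} (y : ↥A)
    (hy : (y : G) ∈ B.map A.subtype) :
    (subIso A B).symm ⟨(y : G), hy⟩ = ⟨y, (mem_mapSub y).mp hy⟩ := by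
  apply (subIso A B).injective
  rw [MulEquiv.apply_symm_apply]
  apply Subtype.ext
  exact coe_subIso ⟨y, (mem_mapSub y).mp hy⟩

lemma coe_subIso_symm {A : Subgroup G} {B : Subgroup ↥A} (x : ↥(B.map A.subtype)) :
    ((((subIso A B).symm x : ↥B) : ↥A) : G) = (x : G) := by
  have h := coe_subIso ((subIso A B).symm x)
  rw [MulEquiv.apply_symm_apply] at h
  exact h.symm

lemma card_mapSub (A : Subgroup G) (B : Subgroup ↥A) [Fintype G] :
    (Fintype.card ↥(B.map A.subtype)) = Fintype.card ↥B :=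
  Fintype.card_congr (subIso A B).toEquiv.symm

lemma charInner_comp {H K : Type} [Group H] [Group K] [Fintype H] [Fintype K] (φ : H ≃* K)
    (f g : K → ℂ) :
    charInner H (fun h => f (φ h)) (fun h => g (φ h)) = charInner K f g := by
  unfold charInner
  rw [Fintype.card_congr φ.toEquiv]
  congr 1
  exact Fintype.sum_equiv φ.toEquiv _ _ (fun x => rfl)

lemma ind_trans [Fintype G] (A : Subgroup G) (B : Subgroup ↥A) (f : ↥B → ℂ) :
    indG (B.map A.subtype) (fun x => f ((subIso A B).symm x)) = indG A (indG B f) := by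
  funext g
  set S : G → ℂ := fun z =>
    if hz : z * g * z⁻¹ ∈ B.map A.subtype then f ((subIso A B).symm ⟨_, hz⟩) else 0 with hS
  have hstep : ∀ x : G, (if hx : x * g * x⁻¹ ∈ A then indG B f ⟨_, hx⟩ else 0)
      = (Fintype.card ↥B : ℂ)⁻¹ * ∑ y : ↥A, S ((y : G) * x) := by
    intro x
    by_cases hx : x * g * x⁻¹ ∈ A
    · rw [dif_pos hx]
      show (Fintype.card ↥B : ℂ)⁻¹ * _ = _
      congr 1
      apply Finset.sum_congr rfl
      intro y _
      have hco : ((y : G) * x) * g * ((y : G) * x)⁻¹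
          = ((y * ⟨x * g * x⁻¹, hx⟩ * y⁻¹ : ↥A) : G) := by
        push_cast
        group
      by_cases hb : (y * ⟨x * g * x⁻¹, hx⟩ * y⁻¹ : ↥A) ∈ B
      · rw [dif_pos hb, hS]
        simp only
        rw [dif_pos (show ((y : G) * x) * g * ((y : G) * x)⁻¹ ∈ B.map A.subtype by
          rw [hco]; exact (mem_mapSub _).mpr hb)]
        congr 1
        rw [show (⟨((y : G) * x) * g * ((y : G) * x)⁻¹, _⟩ : ↥(B.map A.subtype))
            = ⟨((y * ⟨x * g * x⁻¹, hx⟩ * y⁻¹ : ↥A) : G), (mem_mapSub _).mpr hb⟩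
          from Subtype.ext hco]
        rw [subIso_symm_mk]
      · rw [dif_neg hb, hS]
        simp only
        rw [dif_neg]
        intro hmem
        rw [hco] at hmem
        exact hb ((mem_mapSub _).mp hmem)
    · rw [dif_neg hx]
      have hz : ∀ y : ↥A, S ((y : G) * x) = 0 := by
        intro y
        rw [hS]
        simp only
        rw [dif_neg]
        intro hmem
        apply hx
        have h1 : ((y : G) * x) * g * ((y : G) * x)⁻¹ ∈ A :=
          (Subgroup.map_subtype_le B) hmem
        have h2 : x * g * x⁻¹ = (y : G)⁻¹ * (((y : G) * x) * g * ((y : G) * x)⁻¹) * (y : G) := by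
          group
        rw [h2]
        exact A.mul_mem (A.mul_mem (A.inv_mem y.2) h1) y.2
      simp [hz]
  have hsum : ∀ y : ↥A, ∑ x : G, S ((y : G) * x) = ∑ z : G, S z := by
    intro y
    exact Equiv.sum_comp (Equiv.mulLeft (y : G)) S
  have cardA : (Fintype.card ↥A : ℂ) ≠ 0 := Nat.cast_ne_zero.mpr Fintype.card_ne_zero
  have cardB : (Fintype.card ↥B : ℂ) ≠ 0 := Nat.cast_ne_zero.mpr Fintype.card_ne_zero
  calc indG (B.map A.subtype) (fun x => f ((subIso A B).symm x)) g
      = (Fintype.card ↥B : ℂ)⁻¹ * ∑ z : G, S z := by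
        rw [indG, card_mapSub]
    _ = (Fintype.card ↥A : ℂ)⁻¹ * ∑ x : G,
          ((Fintype.card ↥B : ℂ)⁻¹ * ∑ y : ↥A, S ((y : G) * x)) := by
        rw [Finset.mul_sum]
        have h1 : ∀ x : G, (Fintype.card ↥B : ℂ)⁻¹ * ∑ y : ↥A, S ((y : G) * x)
            = ∑ y : ↥A, (Fintype.card ↥B : ℂ)⁻¹ * S ((y : G) * x) :=
          fun x => Finset.mul_sum _ _ _
        simp only [h1]
        rw [Finset.sum_comm]
        have h2 : ∀ y : ↥A, ∑ x : G, (Fintype.card ↥B : ℂ)⁻¹ * S ((y : G) * x)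
            = (Fintype.card ↥B : ℂ)⁻¹ * ∑ z : G, S z := by
          intro y
          rw [← Finset.mul_sum, hsum y]
        simp only [h2]
        rw [Finset.sum_const, Finset.card_univ, nsmul_eq_mul]
        field_simp
        rw [← Finset.sum_div, mul_div_assoc', mul_div_cancel_left₀ _ cardB]
    _ = indG A (indG B f) g := by
        rw [indG]
        congr 1
        exact (Finset.sum_congr rfl (fun x _ => (hstep x))).symm

/-- The map on character pairs. -/
def pairMap [Fintype G] {χ : G → ℂ} (v : CharPair G χ) (u : CharPair ↥v.A v.α) :
    CharPair G χ where
  A := u.A.map v.A.subtype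
  α := fun x => u.α ((subIso v.A u.A).symm x)
  irr := isIrrChar_comp (subIso v.A u.A).symm u.α u.irr
  ind_eq := by rw [ind_trans, u.ind_eq, v.ind_eq]

lemma pairMap_spec [Fintype G] {χ : G → ℂ} (v : CharPair G χ) (u : CharPair ↥v.A v.α)
    (y : ↥u.A) (hy : ((y : ↥v.A) : G) ∈ (pairMap v u).A) :
    (pairMap v u).α ⟨((y : ↥v.A) : G), hy⟩ = u.α y := by
  show u.α ((subIso v.A u.A).symm ⟨((y : ↥v.A) : G), hy⟩) = u.α y
  exact congrArg u.α (subIso_symm_mk (A := v.A) (B := u.A) (y : ↥v.A) hy)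

lemma pairMap_inj [Fintype G] {χ : G → ℂ} (v : CharPair G χ) :
    Function.Injective (pairMap v) := by
  intro u w h
  obtain ⟨B1, a1, i1, e1⟩ := u
  obtain ⟨B2, a2, i2, e2⟩ := w
  have hA : B1.map v.A.subtype = B2.map v.A.subtype := congrArg CharPair.A h
  have hA2 : B1 = B2 := Subgroup.map_injective v.A.subtype_injective hA
  subst hA2
  have hful := congrArg
    (fun p : CharPair G χ => (fun x : G => if hx : x ∈ p.A then p.α ⟨x, hx⟩ else 0)) h
  have hα : a1 = a2 := by
    funext y
    have hmem : ((y : ↥v.A) : G) ∈ B1.map v.A.subtype := (mem_mapSub _).mpr y.2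
    have h1 := pairMap_spec v ⟨B1, a1, i1, e1⟩ y hmem
    have h2 := pairMap_spec v ⟨B1, a2, i2, e2⟩ y hmem
    have h3 : (if hx : ((y : ↥v.A) : G) ∈ B1.map v.A.subtype then
          (pairMap v ⟨B1, a1, i1, e1⟩).α ⟨((y : ↥v.A) : G), hx⟩ else 0)
        = (if hx : ((y : ↥v.A) : G) ∈ B1.map v.A.subtype then
          (pairMap v ⟨B1, a2, i2, e2⟩).α ⟨((y : ↥v.A) : G), hx⟩ else 0) :=
      congrFun hful ((y : ↥v.A) : G)
    rw [dif_pos hmem, dif_pos hmem] at h3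
    exact (h1.symm.trans h3).trans h2
  subst hα
  rfl

lemma edge_map [Fintype G] {χ : G → ℂ} (N : Subgroup G) (v : CharPair G χ)
    (u w : CharPair ↥v.A v.α) (h : EdgeSpec (N.subgroupOf v.A) u w) :
    EdgeSpec N (pairMap v u) (pairMap v w) := by
  obtain ⟨C, γ, hCA, hCB, hBA, hnorm, hCN, hirr, hstab, hlies, hind⟩ := h
  have hst : ∀ b : ↥v.A, b ∈ w.A ↔ (b ∈ u.A ∧ ConjFix γ b) := by
    intro b
    rw [← SetLike.mem_coe, hstab]
    exact Iff.rfl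
  refine ⟨C.map v.A.subtype, fun x => γ ((subIso v.A C).symm x),
    Subgroup.map_mono hCA, Subgroup.map_mono hCB, Subgroup.map_mono hBA,
    ?_, ?_, isIrrChar_comp (subIso v.A C).symm γ hirr, ?_, ?_, ?_⟩
  · -- normality in u.A.map
    intro a ha c hc
    obtain ⟨a0, ha0, rfl⟩ := Subgroup.mem_map.mp ha
    obtain ⟨c0, hc0, rfl⟩ := Subgroup.mem_map.mp hc
    have hcoe : v.A.subtype a0 * v.A.subtype c0 * (v.A.subtype a0)⁻¹
        = v.A.subtype (a0 * c0 * a0⁻¹) := rfl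
    rw [hcoe]
    exact Subgroup.mem_map_of_mem _ (hnorm a0 ha0 c0 hc0)
  · -- contained in N
    intro x hx
    obtain ⟨c0, hc0, rfl⟩ := Subgroup.mem_map.mp hx
    exact Subgroup.mem_subgroupOf.mp (hCN hc0)
  · -- stabilizer description
    ext g
    simp only [Set.mem_setOf_eq, SetLike.mem_coe]
    constructor
    · intro hg
      obtain ⟨b, hb, rfl⟩ := Subgroup.mem_map.mp hg
      obtain ⟨hbu, hcf⟩ := (hst b).mp hb
      refine ⟨Subgroup.mem_map_of_mem _ hbu, ?_⟩
      intro x hx hx'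
      obtain ⟨c, hc, rfl⟩ := Subgroup.mem_map.mp hx
      have hcoe : v.A.subtype b * v.A.subtype c * (v.A.subtype b)⁻¹
          = ((b * c * b⁻¹ : ↥v.A) : G) := rfl
      have hbc : b * c * b⁻¹ ∈ C := (mem_mapSub _).mp (hcoe ▸ hx')
      show γ ((subIso v.A C).symm ⟨_, hx'⟩) = γ ((subIso v.A C).symm ⟨_, hx⟩)
      rw [show (⟨v.A.subtype b * v.A.subtype c * (v.A.subtype b)⁻¹, hx'⟩
            : ↥(C.map v.A.subtype))
          = ⟨((b * c * b⁻¹ : ↥v.A) : G), (mem_mapSub _).mpr hbc⟩ from Subtype.ext hcoe]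
      rw [show (⟨v.A.subtype c, hx⟩ : ↥(C.map v.A.subtype))
          = ⟨((c : ↥v.A) : G), (mem_mapSub _).mpr hc⟩ from Subtype.ext rfl]
      rw [subIso_symm_mk, subIso_symm_mk]
      exact hcf c hc hbc
    · rintro ⟨hgu, hcf⟩
      obtain ⟨a, ha, rfl⟩ := Subgroup.mem_map.mp hgu
      apply Subgroup.mem_map_of_mem
      refine (hst a).mpr ⟨ha, ?_⟩
      intro x hx hx'
      have hx2 : ((x : ↥v.A) : G) ∈ C.map v.A.subtype := (mem_mapSub x).mpr hx
      have hcoe : v.A.subtype a * ((x : ↥v.A) : G) * (v.A.subtype a)⁻¹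
          = ((a * x * a⁻¹ : ↥v.A) : G) := rfl
      have hx2' : v.A.subtype a * ((x : ↥v.A) : G) * (v.A.subtype a)⁻¹ ∈ C.map v.A.subtype := by
        rw [hcoe]; exact (mem_mapSub _).mpr hx'
      have hkey := hcf ((x : ↥v.A) : G) hx2 hx2'
      rw [show (⟨v.A.subtype a * ((x : ↥v.A) : G) * (v.A.subtype a)⁻¹, hx2'⟩
            : ↥(C.map v.A.subtype))
          = ⟨((a * x * a⁻¹ : ↥v.A) : G), (mem_mapSub _).mpr hx'⟩ from Subtype.ext hcoe,
        show (⟨((x : ↥v.A) : G), hx2⟩ : ↥(C.map v.A.subtype))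
          = ⟨((x : ↥v.A) : G), (mem_mapSub _).mpr hx⟩ from Subtype.ext rfl] at hkey
      beta_reduce at hkey
      rw [subIso_symm_mk, subIso_symm_mk] at hkey
      exact hkey
  · -- LiesOver
    have hres : resSub (Subgroup.map_mono hCB) (pairMap v w).α
        = fun x => resSub hCB w.α ((subIso v.A C).symm x) := by
      funext c'
      have hc : (((subIso v.A C).symm c' : ↥C) : ↥v.A) = ((subIso v.A C).symm c' : ↥C) := rfl
      have hcv : ((((subIso v.A C).symm c' : ↥C) : ↥v.A) : G) = (c' : G) := coe_subIso_symm c'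
      show (pairMap v w).α ⟨(c' : G), Subgroup.map_mono hCB c'.2⟩
          = w.α ⟨(((subIso v.A C).symm c' : ↥C) : ↥v.A),
              hCB ((subIso v.A C).symm c' : ↥C).2⟩
      show w.α ((subIso v.A w.A).symm ⟨(c' : G), Subgroup.map_mono hCB c'.2⟩) = _
      rw [show (⟨(c' : G), Subgroup.map_mono hCB c'.2⟩ : ↥(w.A.map v.A.subtype))
          = ⟨((((subIso v.A C).symm c' : ↥C) : ↥v.A) : G),
              (mem_mapSub _).mpr (hCB ((subIso v.A C).symm c' : ↥C).2)⟩
        from Subtype.ext hcv.symm]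
      rw [subIso_symm_mk]
    unfold LiesOver
    have hci := charInner_comp (subIso v.A C).symm (resSub hCB w.α) γ
    rw [← hres] at hci
    exact fun h0 => hlies (hci.symm.trans h0)
  · -- indSub equality
    funext a'
    show indSub (Subgroup.map_mono hBA) (pairMap v w).α a'
        = u.α ((subIso v.A u.A).symm a')
    rw [← hind]
    unfold indSub
    rw [card_mapSub]
    congr 1
    apply Fintype.sum_equiv (subIso v.A u.A).toEquiv.symm
    intro x'
    show (if hx : (x' : G) * (a' : G) * (x' : G)⁻¹ ∈ Subgroup.map v.A.subtype w.A then
          w.α ((subIso v.A w.A).symm ⟨(x' : G) * (a' : G) * (x' : G)⁻¹, hx⟩) else 0)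
        = (if hx : ((subIso v.A u.A).symm x' : ↥v.A) * ((subIso v.A u.A).symm a' : ↥v.A)
              * (((subIso v.A u.A).symm x' : ↥v.A))⁻¹ ∈ w.A then
          w.α ⟨((subIso v.A u.A).symm x' : ↥v.A) * ((subIso v.A u.A).symm a' : ↥v.A)
              * (((subIso v.A u.A).symm x' : ↥v.A))⁻¹, hx⟩ else 0)
    have hca : ((((subIso v.A u.A).symm a' : ↥u.A) : ↥v.A) : G) = (a' : G) :=
      coe_subIso_symm a'
    have hcy : ((((subIso v.A u.A).symm x' : ↥u.A) : ↥v.A) : G) = (x' : G) :=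
      coe_subIso_symm x'
    set y : ↥u.A := (subIso v.A u.A).symm x' with hy
    set a : ↥u.A := (subIso v.A u.A).symm a' with ha
    have hcoe : (x' : G) * (a' : G) * (x' : G)⁻¹
        = (((y : ↥v.A) * (a : ↥v.A) * (y : ↥v.A)⁻¹ : ↥v.A) : G) := by
      rw [← hcy, ← hca]
      rfl
    by_cases hb : ((y : ↥v.A) * (a : ↥v.A) * (y : ↥v.A)⁻¹ : ↥v.A) ∈ w.A
    · have hmem : (x' : G) * (a' : G) * (x' : G)⁻¹ ∈ w.A.map v.A.subtype := by
        rw [hcoe]; exact (mem_mapSub _).mpr hb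
      rw [dif_pos hmem, dif_pos hb]
      show w.α ((subIso v.A w.A).symm ⟨(x' : G) * (a' : G) * (x' : G)⁻¹, hmem⟩) = _
      rw [show (⟨(x' : G) * (a' : G) * (x' : G)⁻¹, hmem⟩ : ↥(w.A.map v.A.subtype))
          = ⟨(((y : ↥v.A) * (a : ↥v.A) * (y : ↥v.A)⁻¹ : ↥v.A) : G), (mem_mapSub _).mpr hb⟩
        from Subtype.ext hcoe]
      rw [subIso_symm_mk]
    · rw [dif_neg, dif_neg hb]
      intro hmem
      rw [hcoe] at hmem
      exact hb ((mem_mapSub _).mp hmem)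


/-- For a character pair `(A, α) = v` inducing `χ`, the graph `C_{A∩N}(α)` formed inside the
group `A` maps into `C_N(χ)`: every vertex corresponds to a vertex (the pair obtained by
regarding a subgroup of `A` as a subgroup of `G`), every edge to an edge, and consequently
reachability in `C_{A∩N}(α)` implies reachability in `C_N(χ)`. -/
theorem statement9 {G : Type} [Group G] [Fintype G] (χ : G → ℂ) (N : Subgroup G) [N.Normal]
    (v : CharPair G χ) :
    ∃ Φ : CharPair ↥v.A v.α → CharPair G χ,
      (∀ u, (Φ u).A = u.A.map v.A.subtype) ∧
      (∀ (u : CharPair ↥v.A v.α) (y : ↥u.A) (hy : ((y : ↥v.A) : G) ∈ (Φ u).A),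
        (Φ u).α ⟨((y : ↥v.A) : G), hy⟩ = u.α y) ∧
      (∀ u w, (cliffordGraph v.α (N.subgroupOf v.A)).Adj u w →
        (cliffordGraph χ N).Adj (Φ u) (Φ w)) ∧
      (∀ u w, (cliffordGraph v.α (N.subgroupOf v.A)).Reachable u w →
        (cliffordGraph χ N).Reachable (Φ u) (Φ w)) := by
  refine ⟨pairMap v, fun u => rfl, fun u y hy => pairMap_spec v u y hy, ?_, ?_⟩
  · intro u w hadj
    exact (⟨fun hEq => hadj.1 (pairMap_inj v hEq),
      hadj.2.imp (edge_map N v u w) (edge_map N v w u)⟩ : _ ∧ _)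
  · intro u w hre
    let f : (cliffordGraph v.α (N.subgroupOf v.A)) →g (cliffordGraph χ N) :=
      RelHom.mk (pairMap v) (fun {a b} hadj =>
        (⟨fun hEq => hadj.1 (pairMap_inj v hEq),
          hadj.2.imp (edge_map N v _ _) (edge_map N v _ _)⟩ : _ ∧ _))
    exact hre.map f
end
end

section
/- Let G be a finite group with normal subgroups N and R, set L = N ∩ R, and suppose R/L is abelian and N centralizes R/L (which holds since [N, R] ⊆ L). Let θ ∈ Irr(L) be G-invariant and let φ ∈ Irr(R) satisfy φ_L = θ. Let B be the stabilizer of φ in G and assume G = NB. Identifying Irr(R/L) with the group of linear characters of R trivial on L, define Δ = { λ ∈ Irr(R/L) : φλ = φ^g for some g ∈ N }. Then Δ is a subgroup of Irr(R/L), and Δ is invariant under the conjugation action of G on Irr(R/L). -/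
open scoped BigOperators Classical Pointwise

noncomputable section

variable {G : Type} [Group G]

/-- If a linear character of `R` is trivial on `N ⊓ R ⊇ ⁅N, R⁆`, then it is invariant
under conjugation by elements of `N`. -/
lemma lam_conj_eq {G : Type} [Group G] {N R : Subgroup G}
    (hcent : ⁅N, R⁆ ≤ N ⊓ R) (lam : ↥R →* ℂˣ)
    (htriv : ∀ x : ↥R, (x : G) ∈ N ⊓ R → lam x = 1)
    {n r : G} (hn : n ∈ N) (hr : r ∈ R) (h : n * r * n⁻¹ ∈ R) :
    lam ⟨n * r * n⁻¹, h⟩ = lam ⟨r, hr⟩ := by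
  have hc : n * r * n⁻¹ * r⁻¹ ∈ N ⊓ R :=
    hcent (Subgroup.commutator_mem_commutator hn hr)
  have hcR : n * r * n⁻¹ * r⁻¹ ∈ R := hc.2
  have hsplit : (⟨n * r * n⁻¹, h⟩ : ↥R) = ⟨n * r * n⁻¹ * r⁻¹, hcR⟩ * ⟨r, hr⟩ := by
    ext
    show n * r * n⁻¹ = n * r * n⁻¹ * r⁻¹ * r
    group
  rw [hsplit, map_mul, htriv ⟨_, hcR⟩ hc, one_mul]


/-- With `N, R ◁ G`, `L = N ⊓ R`, `R/L` abelian, `θ ∈ Irr(L)` `G`-invariant, `φ ∈ Irr(R)`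
with `φ_L = θ`, `B` the stabilizer of `φ` in `G` and `G = NB`, the set
`Δ = {λ ∈ Irr(R/L) : φλ = φ^g for some g ∈ N}` is a subgroup of `Irr(R/L)` invariant under
the conjugation action of `G`. -/
theorem statement13 {G : Type} [Group G] [Fintype G] (N R : Subgroup G)
    [hN : N.Normal] [hR : R.Normal]
    (habel : ⁅R, R⁆ ≤ N ⊓ R) (hcent : ⁅N, R⁆ ≤ N ⊓ R)
    (θ : ↥(N ⊓ R) → ℂ) (hθ : IsIrrChar ↥(N ⊓ R) θ) (hθinv : ∀ g : G, ConjFix θ g)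
    (φ : ↥R → ℂ) (hφ : IsIrrChar ↥R φ)
    (hφθ : resSub (inf_le_right : N ⊓ R ≤ R) φ = θ)
    (B : Subgroup G) (hB : ∀ g : G, g ∈ B ↔ ConjFix φ g)
    (hNB : (N : Set G) * (B : Set G) = Set.univ) :
    -- Δ is a subgroup of Irr(R/L) :
    ((1 : ↥R →* ℂˣ) ∈ Delta N R φ) ∧
    (∀ lam ∈ Delta N R φ, ∀ mu ∈ Delta N R φ, lam * mu ∈ Delta N R φ) ∧
    (∀ lam ∈ Delta N R φ, lam⁻¹ ∈ Delta N R φ) ∧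
    -- Δ is invariant under the conjugation action of G :
    (∀ (g : G), ∀ lam ∈ Delta N R φ, ∀ lam' : ↥R →* ℂˣ,
      (∀ x : ↥R, lam' x = lam ⟨g * (x : G) * g⁻¹, hR.conj_mem (x : G) x.2 g⟩) →
      lam' ∈ Delta N R φ) := by
  refine ⟨?_, ?_, ?_, ?_⟩
  · -- identity
    refine ⟨fun x _ => rfl, 1, one_mem N, fun x hx => ?_⟩
    simp only [MonoidHom.one_apply, Units.val_one, mul_one]
    exact congrArg φ (Subtype.ext (by group))
  · -- closure under multiplication
    rintro lam ⟨hlt, g, hg, hlam⟩ mu ⟨hmt, h, hh, hmu⟩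
    refine ⟨fun x hx => by rw [MonoidHom.mul_apply, hlt x hx, hmt x hx, one_mul],
      h * g, mul_mem hh hg, fun x hx => ?_⟩
    have hgx : g * (x : G) * g⁻¹ ∈ R := hR.conj_mem _ x.2 g
    have key1 := hlam x hgx
    have key2 := hmu ⟨g * (x : G) * g⁻¹, hgx⟩ (hR.conj_mem _ hgx h)
    have hmux : mu ⟨g * (x : G) * g⁻¹, hgx⟩ = mu x :=
      lam_conj_eq hcent mu hmt hg x.2 hgx
    have : φ x * ((lam x : ℂ) * (mu x : ℂ)) =
        φ ⟨g * (x : G) * g⁻¹, hgx⟩ * (mu ⟨g * (x : G) * g⁻¹, hgx⟩ : ℂ) := by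
      rw [← mul_assoc, key1, hmux]
    rw [MonoidHom.mul_apply, Units.val_mul, this, key2]
    exact congrArg φ (Subtype.ext (by show h * (g * ↑x * g⁻¹) * h⁻¹ = _; group))
  · -- closure under inverses
    rintro lam ⟨hlt, g, hg, hlam⟩
    refine ⟨fun x hx => by rw [MonoidHom.inv_apply, hlt x hx, inv_one],
      g⁻¹, inv_mem hg, fun x hx => ?_⟩
    set y : ↥R := ⟨g⁻¹ * (x : G) * g⁻¹⁻¹, hx⟩ with hy
    have hgy : g * (y : G) * g⁻¹ ∈ R := hR.conj_mem _ y.2 g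
    have key := hlam y hgy
    have hyx : φ ⟨g * (y : G) * g⁻¹, hgy⟩ = φ x :=
      congrArg φ (Subtype.ext (by show g * (g⁻¹ * ↑x * g⁻¹⁻¹) * g⁻¹ = (x : G); group))
    have hlamy : lam y = lam x := lam_conj_eq hcent lam hlt (inv_mem hg) x.2 hx
    rw [hyx, hlamy] at key
    have hne : ((lam x : ℂˣ) : ℂ) ≠ 0 := Units.ne_zero _
    rw [MonoidHom.inv_apply, Units.val_inv_eq_inv_val, ← key, mul_assoc,
      mul_inv_cancel₀ hne, mul_one]
  · -- invariance under conjugation by G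
    intro g lam hlam lam' hlam'
    obtain ⟨hlt, n, hn, hkey⟩ := hlam
    have hg : g ∈ (N : Set G) * (B : Set G) := hNB ▸ Set.mem_univ g
    rw [Set.mem_mul] at hg
    obtain ⟨n₀, hn₀, b, hb, rfl⟩ := hg
    have hbfix : ConjFix φ b := (hB b).mp hb
    constructor
    · intro x hx
      have hconj : ((n₀ * b) * (x : G) * (n₀ * b)⁻¹) ∈ N ⊓ R :=
        ⟨hN.conj_mem _ hx.1 _, hR.conj_mem _ hx.2 _⟩
      rw [hlam' x, hlt _ hconj]
    · have hmN : b⁻¹ * n * b ∈ N := by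
        have := hN.conj_mem n hn b⁻¹; rwa [inv_inv] at this
      refine ⟨b⁻¹ * n * b, hmN, fun x hx => ?_⟩
      -- set y = b x b⁻¹
      have hyR : b * (x : G) * b⁻¹ ∈ R := hR.conj_mem _ x.2 b
      set y : ↥R := ⟨b * (x : G) * b⁻¹, hyR⟩ with hydef
      -- lam' x = lam y
      have hconjR : (n₀ * b) * (x : G) * (n₀ * b)⁻¹ ∈ R := hR.conj_mem _ x.2 _
      have h1 : (⟨(n₀ * b) * (x : G) * (n₀ * b)⁻¹,
          hR.conj_mem (x : G) x.2 (n₀ * b)⟩ : ↥R) =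
          ⟨n₀ * (b * (x : G) * b⁻¹) * n₀⁻¹, by
            have : n₀ * (b * (x : G) * b⁻¹) * n₀⁻¹ = (n₀ * b) * (x : G) * (n₀ * b)⁻¹ := by
              group
            rw [this]; exact hconjR⟩ := by
        ext; show (n₀ * b) * (x : G) * (n₀ * b)⁻¹ = _; group
      have hlamval : lam' x = lam y := by
        rw [hlam' x, h1]
        exact lam_conj_eq hcent lam hlt hn₀ y.2 _
      -- φ x = φ y
      have hφxy : φ x = φ y := by
        have := hbfix (x : G) x.2 hyR
        rw [Subtype.coe_eta] at this
        exact this.symm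
      -- φ y * lam y = φ ⟨n y n⁻¹⟩
      have hnyR : n * (y : G) * n⁻¹ ∈ R := hR.conj_mem _ y.2 n
      have key := hkey y hnyR
      -- φ ⟨n y n⁻¹⟩ = φ ⟨b (m x m⁻¹) b⁻¹⟩ = φ ⟨m x m⁻¹⟩ where m = b⁻¹ n b
      have hmxR : (b⁻¹ * n * b) * (x : G) * (b⁻¹ * n * b)⁻¹ ∈ R := hx
      have hbmR : b * ((b⁻¹ * n * b) * (x : G) * (b⁻¹ * n * b)⁻¹) * b⁻¹ ∈ R :=
        hR.conj_mem _ hmxR b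
      have h2 : φ ⟨n * (y : G) * n⁻¹, hnyR⟩ =
          φ ⟨b * ((b⁻¹ * n * b) * (x : G) * (b⁻¹ * n * b)⁻¹) * b⁻¹, hbmR⟩ :=
        congrArg φ (Subtype.ext (by
          show n * (b * (x : G) * b⁻¹) * n⁻¹ = _; group))
      have h3 : φ ⟨b * ((b⁻¹ * n * b) * (x : G) * (b⁻¹ * n * b)⁻¹) * b⁻¹, hbmR⟩ =
          φ ⟨(b⁻¹ * n * b) * (x : G) * (b⁻¹ * n * b)⁻¹, hx⟩ :=
        hbfix _ hmxR hbmR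
      rw [hlamval, hφxy, key, h2, h3]
end
end

section
/- Let G be a finite group with normal subgroups N and R, set L = N ∩ R and M = NR, and suppose R/L is abelian. Let θ ∈ Irr(L) be G-invariant and let φ ∈ Irr(R) satisfy φ_L = θ. Let B be the stabilizer of φ in G. Then M ∩ B is a normal subgroup of G; indeed M ∩ B = M ∩ B^g for all g ∈ G, where B^g = g⁻¹Bg. -/
open scoped BigOperators Classical Pointwise

noncomputable section

variable {G : Type} [Group G]

/-! ### Auxiliary machinery for `statement15` -/

namespace Aux15

open CategoryTheory CategoryTheory.Limits

section Twist

variable {H : Type} [Group H]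

/-- Twist a representation by an endomorphism `e` of the group and a linear character `lam`. -/
def twistRep (e : H →* H) (lam : H →* ℂˣ) (V : FDRep ℂ H) : Representation ℂ H V where
  toFun x := (lam x : ℂ) • V.ρ (e x)
  map_one' := by simp only [map_one, Units.val_one, one_smul]
  map_mul' x y := by
    ext v
    simp only [map_mul, Units.val_mul, LinearMap.smul_apply, Module.End.mul_apply,
      LinearMap.map_smul, smul_smul]

def twistObj (e : H →* H) (lam : H →* ℂˣ) (V : FDRep ℂ H) : FDRep ℂ H :=
  FDRep.of (twistRep e lam V)

lemma twist_comm (e : H →* H) (lam : H →* ℂˣ) {V W : FDRep ℂ H} (f : V ⟶ W) (x : H) :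
    Action.ρ (twistObj e lam V) x ≫ f.hom = f.hom ≫ Action.ρ (twistObj e lam W) x := by
  have h := f.comm (e x)
  ext v
  have hv := congrArg (fun g => g.hom.hom v) h
  change f.hom.hom.hom ((lam x : ℂ) • (V.ρ (e x)) v) = (lam x : ℂ) • (W.ρ (e x)) (f.hom.hom.hom v)
  rw [map_smul]
  exact congrArg _ hv

def twistFunctor (e : H →* H) (lam : H →* ℂˣ) : FDRep ℂ H ⥤ FDRep ℂ H where
  obj V := twistObj e lam V
  map {V W} f := { hom := f.hom, comm := twist_comm e lam f }
  map_id V := rfl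
  map_comp f g := rfl

lemma twistObj_character (e : H →* H) (lam : H →* ℂˣ) (V : FDRep ℂ H) (x : H) :
    (twistObj e lam V).character x = (lam x : ℂ) * V.character (e x) := by
  simp only [FDRep.character, twistObj, FDRep.of_ρ]
  show LinearMap.trace ℂ _ ((lam x : ℂ) • V.ρ (e x)) = _
  rw [map_smul]
  rfl

theorem simple_transfer {C D : Type*} [Category C] [Category D]
    [HasZeroMorphisms C] [HasZeroMorphisms D]
    (E : C ≌ D) (hz : ∀ {X Y : D} (f : X ⟶ Y), E.inverse.map f = 0 ↔ f = 0)
    (X : C) [Simple X] : Simple (E.functor.obj X) := by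
  constructor
  intro Y f hf
  set f' : E.inverse.obj Y ⟶ X := E.inverse.map f ≫ (E.unitIso.app X).inv with hf'
  haveI : Mono (E.inverse.map f) := inferInstance
  haveI : Mono f' := mono_comp _ _
  have hiso : IsIso f ↔ IsIso f' := by
    constructor
    · intro h; exact inferInstance
    · intro h
      have h2 : E.inverse.map f = f' ≫ (E.unitIso.app X).hom := by simp [hf']
      have : IsIso (E.inverse.map f) := by rw [h2]; infer_instance
      exact isIso_of_reflects_iso f E.inverse
  have hzero : f = 0 ↔ f' = 0 := by
    constructor
    · intro h
      rw [hf', (hz f).mpr h, zero_comp]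
    · intro h
      apply (hz f).mp
      have : E.inverse.map f = f' ≫ (E.unitIso.app X).hom := by simp [hf']
      rw [this, h, zero_comp]
  rw [hiso, Simple.mono_isIso_iff_nonzero f']
  exact not_congr hzero.symm

lemma doubleTwist1_ρ (e : H ≃* H) (lam : H →* ℂˣ) (X : FDRep ℂ H) (x : H) :
    (twistObj e.symm.toMonoidHom (lam.comp e.symm.toMonoidHom)⁻¹
      (twistObj e.toMonoidHom lam X)).ρ x = X.ρ x := by
  show (twistRep e.symm.toMonoidHom (lam.comp e.symm.toMonoidHom)⁻¹
      (twistObj e.toMonoidHom lam X)) x = X.ρ x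
  ext v
  show ((lam.comp e.symm.toMonoidHom)⁻¹ x : ℂ) •
      ((twistRep e.toMonoidHom lam X) (e.symm x)) v = X.ρ x v
  show ((lam.comp e.symm.toMonoidHom)⁻¹ x : ℂ) •
      ((lam (e.symm x) : ℂ) • X.ρ (e (e.symm x)) v) = X.ρ x v
  rw [smul_smul, MonoidHom.inv_apply, MonoidHom.comp_apply]
  simp

lemma doubleTwist2_ρ (e : H ≃* H) (lam : H →* ℂˣ) (X : FDRep ℂ H) (x : H) :
    (twistObj e.toMonoidHom lam
      (twistObj e.symm.toMonoidHom (lam.comp e.symm.toMonoidHom)⁻¹ X)).ρ x = X.ρ x := by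
  show (twistRep e.toMonoidHom lam
      (twistObj e.symm.toMonoidHom (lam.comp e.symm.toMonoidHom)⁻¹ X)) x = X.ρ x
  ext v
  show (lam x : ℂ) •
      ((twistRep e.symm.toMonoidHom (lam.comp e.symm.toMonoidHom)⁻¹ X) (e x)) v = X.ρ x v
  show (lam x : ℂ) •
      (((lam.comp e.symm.toMonoidHom)⁻¹ (e x) : ℂ) • X.ρ (e.symm (e x)) v) = X.ρ x v
  rw [smul_smul, MonoidHom.inv_apply, MonoidHom.comp_apply]
  simp

def twistEquiv (e : H ≃* H) (lam : H →* ℂˣ) : FDRep ℂ H ≌ FDRep ℂ H where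
  functor := twistFunctor e.toMonoidHom lam
  inverse := twistFunctor e.symm.toMonoidHom (lam.comp e.symm.toMonoidHom)⁻¹
  unitIso := NatIso.ofComponents
    (fun X => Action.mkIso (Iso.refl _)
      (fun x => by simp only [twistFunctor, Category.comp_id, Category.id_comp, Iso.refl_hom]; ext v; exact LinearMap.congr_fun (doubleTwist1_ρ e lam X x).symm v))
    (fun {X Y} f => by apply Action.hom_ext; simp [twistFunctor]; rfl)
  counitIso := NatIso.ofComponents
    (fun X => Action.mkIso (Iso.refl _)
      (fun x => by simp only [twistFunctor, Category.comp_id, Category.id_comp, Iso.refl_hom]; ext v; exact LinearMap.congr_fun (doubleTwist2_ρ e lam X x) v))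
    (fun {X Y} f => by apply Action.hom_ext; simp [twistFunctor]; rfl)
  functor_unitIso_comp := by
    intro X
    apply Action.hom_ext
    simp [twistFunctor]
    rfl

lemma twistFunctor_map_eq_zero_iff (e : H →* H) (lam : H →* ℂˣ) {V W : FDRep ℂ H}
    (f : V ⟶ W) : (twistFunctor e lam).map f = 0 ↔ f = 0 := by
  constructor
  · intro h
    apply Action.hom_ext
    have h2 := congrArg Action.Hom.hom h
    exact h2
  · intro h
    subst h
    apply Action.hom_ext
    rfl

lemma twist_simple (e : H ≃* H) (lam : H →* ℂˣ) (V : FDRep ℂ H) [Simple V] :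
    Simple (twistObj e.toMonoidHom lam V) :=
  simple_transfer (twistEquiv e lam) (fun f => twistFunctor_map_eq_zero_iff _ _ f) V

end Twist

section Duality

lemma finite_monoidHom_units (A : Type) [CommGroup A] [Finite A] : Finite (A →* ℂˣ) := by
  have h1 : NeZero (Monoid.exponent A) := ⟨Monoid.ExponentExists.of_finite.exponent_ne_zero⟩
  obtain ⟨eqv⟩ := CommGroup.monoidHom_mulEquiv_of_hasEnoughRootsOfUnity A ℂ
  exact Finite.of_equiv A eqv.symm.toEquiv

lemma sum_chars (A : Type) [CommGroup A] [Finite A] [Fintype (A →* ℂˣ)] (a : A) :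
    ∑ χ : A →* ℂˣ, (χ a : ℂ) = if a = 1 then (Fintype.card (A →* ℂˣ) : ℂ) else 0 := by
  split_ifs with h
  · subst h; simp
  · have h1 : NeZero (Monoid.exponent A) := ⟨Monoid.ExponentExists.of_finite.exponent_ne_zero⟩
    obtain ⟨χ₀, hχ₀⟩ := CommGroup.exists_apply_ne_one_of_hasEnoughRootsOfUnity A ℂ h
    have key : ∑ χ : A →* ℂˣ, (χ a : ℂ) = (χ₀ a : ℂ) * ∑ χ : A →* ℂˣ, (χ a : ℂ) := by
      rw [Finset.mul_sum]
      apply Fintype.sum_equiv (Equiv.mulLeft χ₀).symm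
      intro χ
      simp [Units.val_mul, mul_inv_cancel_left]
    have h2 : ((χ₀ a : ℂ) - 1) * ∑ χ : A →* ℂˣ, (χ a : ℂ) = 0 := by
      rw [sub_mul, one_mul]
      linear_combination -key
    rcases mul_eq_zero.mp h2 with h3 | h3
    · exfalso
      apply hχ₀
      have h4 : (χ₀ a : ℂ) = 1 := by linear_combination h3
      exact Units.ext h4
    · exact h3

lemma char_orthonormal' {H : Type} [Group H] [Fintype H] (V W : FDRep ℂ H)
    [Simple V] [Simple W] :
    ∑ g : H, V.character g * W.character g⁻¹ =
      if Nonempty (V ≅ W) then (Fintype.card H : ℂ) else 0 := by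
  letI : Invertible ((Nat.card H : ℂ)) :=
    invertibleOfNonzero (Nat.cast_ne_zero.mpr Nat.card_pos.ne')
  have h := FDRep.char_orthonormal (k := ℂ) (G := H) V W
  rw [Nat.card_eq_fintype_card] at h
  have h2 := congrArg (fun t => (Fintype.card H : ℂ) * t) h
  rw [mul_inv_cancel_left₀ (Nat.cast_ne_zero.mpr Fintype.card_ne_zero)] at h2
  rw [h2]
  split_ifs <;> ring

end Duality

section Main

def conjEquiv {R : Subgroup G} (hR : R.Normal) (g : G) : ↥R ≃* ↥R where
  toFun x := ⟨g * x * g⁻¹, hR.conj_mem x x.2 g⟩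
  invFun x := ⟨g⁻¹ * x * g, by simpa using hR.conj_mem x x.2 g⁻¹⟩
  left_inv x := by ext; simp; group
  right_inv x := by ext; simp; group
  map_mul' x y := by ext; simp

open scoped commutatorElement in
lemma commGroup_quot (N R : Subgroup G) [N.Normal] [R.Normal] (habel : ⁅R, R⁆ ≤ N ⊓ R) :
    ∀ a b : ↥R ⧸ (N ⊓ R).subgroupOf R, a * b = b * a := by
  intro a b
  induction a using QuotientGroup.induction_on with | H x =>
  induction b using QuotientGroup.induction_on with | H y =>
  rw [← QuotientGroup.mk_mul, ← QuotientGroup.mk_mul, QuotientGroup.eq,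
    Subgroup.mem_subgroupOf]
  have h1 : (((x*y)⁻¹ * (y*x) : ↥R) : G) = ⁅(↑y : G)⁻¹, (↑x : G)⁻¹⁆ := by
    push_cast
    group
  rw [h1]
  exact habel (Subgroup.commutator_mem_commutator (R.inv_mem y.2) (R.inv_mem x.2))

lemma key_lambda {G : Type} [Group G] [Fintype G] (N R : Subgroup G)
    [hN : N.Normal] [hR : R.Normal]
    (habel : ⁅R, R⁆ ≤ N ⊓ R)
    (θ : ↥(N ⊓ R) → ℂ) (hθ : IsIrrChar ↥(N ⊓ R) θ) (hθinv : ∀ g : G, ConjFix θ g)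
    (φ : ↥R → ℂ) (hφ : IsIrrChar ↥R φ)
    (hφθ : resSub (inf_le_right : N ⊓ R ≤ R) φ = θ) (g : G) :
    ∃ lam : ↥R →* ℂˣ, (∀ x : ↥R, (x : G) ∈ N ⊓ R → lam x = 1) ∧
      ∀ (x : ↥R) (hx' : g * (x : G) * g⁻¹ ∈ R),
        φ ⟨g * (x : G) * g⁻¹, hx'⟩ = (lam x : ℂ) * φ x := by
  classical
  obtain ⟨V, hVs, hVc⟩ := hφ
  obtain ⟨Vθ, hVθs, hVθc⟩ := hθ
  haveI := hVs
  haveI := hVθs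
  letI : CommGroup (↥R ⧸ (N ⊓ R).subgroupOf R) :=
    { (inferInstance : Group (↥R ⧸ (N ⊓ R).subgroupOf R)) with
      mul_comm := commGroup_quot N R habel }
  haveI : Finite ((↥R ⧸ (N ⊓ R).subgroupOf R) →* ℂˣ) := finite_monoidHom_units _
  letI : Fintype ((↥R ⧸ (N ⊓ R).subgroupOf R) →* ℂˣ) := Fintype.ofFinite _
  set e : ↥R ≃* ↥R := conjEquiv hR g with hedef
  set lamOf : ((↥R ⧸ (N ⊓ R).subgroupOf R) →* ℂˣ) → (↥R →* ℂˣ) :=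
    fun χ => χ.comp (QuotientGroup.mk' ((N ⊓ R).subgroupOf R)) with hlamOf
  set Ψ : FDRep ℂ ↥R := twistObj e.toMonoidHom 1 V with hΨdef
  haveI : CategoryTheory.Simple Ψ := twist_simple e 1 V
  set Φ : ((↥R ⧸ (N ⊓ R).subgroupOf R) →* ℂˣ) → FDRep ℂ ↥R :=
    fun χ => twistObj (MulEquiv.refl ↥R).toMonoidHom (lamOf χ) V with hΦdef
  have hΦsimple : ∀ χ, CategoryTheory.Simple (Φ χ) :=
    fun χ => twist_simple (MulEquiv.refl ↥R) (lamOf χ) V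
  have hres : ∀ (v : G) (hv : v ∈ N ⊓ R), φ ⟨v, hv.2⟩ = θ ⟨v, hv⟩ := by
    intro v hv
    exact congrFun hφθ ⟨v, hv⟩
  have hΨchar : ∀ (x : ↥R) (hx' : g * (x : G) * g⁻¹ ∈ R),
      Ψ.character x = φ ⟨g * (x : G) * g⁻¹, hx'⟩ := by
    intro x hx'
    rw [hΨdef, twistObj_character]
    simp only [MonoidHom.one_apply, Units.val_one, one_mul]
    rw [hVc]
    rfl
  have hΦchar : ∀ χ (x : ↥R), (Φ χ).character x = ((lamOf χ) x : ℂ) * φ x := by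
    intro χ x
    rw [hΦdef, twistObj_character, hVc]
    rfl
  have hlamsum : ∀ (x : ↥R), (∑ χ, ((lamOf χ) x : ℂ)) =
      if (x : G) ∈ N ⊓ R then (Fintype.card ((↥R ⧸ (N ⊓ R).subgroupOf R) →* ℂˣ) : ℂ)
      else 0 := by
    intro x
    have hiff : ((QuotientGroup.mk' ((N ⊓ R).subgroupOf R)) x = 1) ↔ ((x : G) ∈ N ⊓ R) := by
      rw [QuotientGroup.mk'_apply, QuotientGroup.eq_one_iff, Subgroup.mem_subgroupOf]
    calc (∑ χ, ((lamOf χ) x : ℂ))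
        = ∑ χ : ((↥R ⧸ (N ⊓ R).subgroupOf R) →* ℂˣ),
            ((χ ((QuotientGroup.mk' ((N ⊓ R).subgroupOf R)) x) : ℂ)) := rfl
      _ = _ := by
          rw [sum_chars]
          simp only [hiff]
  have horthθ : (∑ y : ↥(N ⊓ R), θ y * θ y⁻¹) = (Fintype.card ↥(N ⊓ R) : ℂ) := by
    have h := char_orthonormal' Vθ Vθ
    rw [if_pos ⟨Iso.refl _⟩, hVθc] at h
    exact h
  have hLnorm : (N ⊓ R).Normal := inferInstance
  have hsub : (∑ x : ↥R, (if (x : G) ∈ N ⊓ R then (Ψ.character x * φ x⁻¹) else 0))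
      = ∑ y : ↥(N ⊓ R), θ y * θ y⁻¹ := by
    rw [← Finset.sum_filter]
    refine Finset.sum_bij'
      (i := fun (x : ↥R) hx => (⟨(x : G), (Finset.mem_filter.mp hx).2⟩ : ↥(N ⊓ R)))
      (j := fun (y : ↥(N ⊓ R)) _ => (⟨(y : G), y.2.2⟩ : ↥R)) ?_ ?_ ?_ ?_ ?_
    · intro a ha
      exact Finset.mem_univ _
    · intro y hy
      rw [Finset.mem_filter]
      exact ⟨Finset.mem_univ _, y.2⟩
    · intro a ha
      rfl
    · intro y hy
      rfl
    · intro x hx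
      have hxL : (x : G) ∈ N ⊓ R := (Finset.mem_filter.mp hx).2
      have hconj : g * (x : G) * g⁻¹ ∈ N ⊓ R := hLnorm.conj_mem _ hxL g
      have h1 : Ψ.character x = θ ⟨(x : G), hxL⟩ := by
        rw [hΨchar x hconj.2]
        rw [hres _ hconj]
        exact hθinv g (x : G) hxL hconj
      have h2 : φ x⁻¹ = θ ⟨(x : G)⁻¹, inv_mem hxL⟩ := hres _ (inv_mem hxL)
      rw [h1, h2]
      rfl
  have hex : ∃ χ, Nonempty (Ψ ≅ Φ χ) := by
    by_contra hno
    push_neg at hno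
    have hzero : ∀ χ, (∑ x : ↥R, Ψ.character x * (Φ χ).character x⁻¹) = 0 := by
      intro χ
      haveI := hΦsimple χ
      have h := char_orthonormal' Ψ (Φ χ)
      rwa [if_neg (by exact fun h' => h'.elim (hno χ).false)] at h
    have htot : (∑ χ, ∑ x : ↥R, Ψ.character x * (Φ χ).character x⁻¹) = 0 := by
      rw [Finset.sum_eq_zero]
      intro χ _
      exact hzero χ
    rw [Finset.sum_comm] at htot
    have heval : ∀ x : ↥R, (∑ χ, Ψ.character x * (Φ χ).character x⁻¹)
        = (Fintype.card ((↥R ⧸ (N ⊓ R).subgroupOf R) →* ℂˣ) : ℂ) *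
          (if (x : G) ∈ N ⊓ R then (Ψ.character x * φ x⁻¹) else 0) := by
      intro x
      have step : ∀ χ, Ψ.character x * (Φ χ).character x⁻¹
          = (Ψ.character x * φ x⁻¹) * ((lamOf χ) x⁻¹ : ℂ) := by
        intro χ
        rw [hΦchar χ x⁻¹]
        ring
      rw [Finset.sum_congr rfl (fun χ _ => step χ), ← Finset.mul_sum, hlamsum x⁻¹]
      have hmem : (((x⁻¹ : ↥R) : G) ∈ N ⊓ R) = ((x : G) ∈ N ⊓ R) := by
        apply propext
        constructor
        · intro h
          simpa using inv_mem h
        · intro h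
          exact inv_mem h
      rw [hmem]
      split_ifs <;> ring
    rw [Finset.sum_congr rfl (fun x _ => heval x), ← Finset.mul_sum, hsub, horthθ] at htot
    have hc1 : (Fintype.card ((↥R ⧸ (N ⊓ R).subgroupOf R) →* ℂˣ) : ℂ) ≠ 0 :=
      Nat.cast_ne_zero.mpr Fintype.card_ne_zero
    have hc2 : (Fintype.card ↥(N ⊓ R) : ℂ) ≠ 0 :=
      Nat.cast_ne_zero.mpr Fintype.card_ne_zero
    exact (mul_ne_zero hc1 hc2) htot
  obtain ⟨χ, ⟨i⟩⟩ := hex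
  have hchareq : Ψ.character = (Φ χ).character := FDRep.char_iso i
  refine ⟨lamOf χ, ?_, ?_⟩
  · intro x hx
    show χ ((QuotientGroup.mk' ((N ⊓ R).subgroupOf R)) x) = 1
    have h1 : (QuotientGroup.mk' ((N ⊓ R).subgroupOf R)) x = 1 := by
      rw [QuotientGroup.mk'_apply, QuotientGroup.eq_one_iff, Subgroup.mem_subgroupOf]
      exact hx
    rw [h1, map_one]
  · intro x hx'
    have h := congrFun hchareq x
    rw [hΨchar x hx', hΦchar χ x] at h
    exact h

lemma conj_comm_mem {G : Type} [Group G] (N R : Subgroup G) [hN : N.Normal] [hR : R.Normal]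
    (habel : ⁅R, R⁆ ≤ N ⊓ R) {m : G} (hm : m ∈ N ⊔ R) {x : G} (hx : x ∈ R) :
    m * x * m⁻¹ * x⁻¹ ∈ N ⊓ R := by
  have hLnorm : (N ⊓ R).Normal := inferInstance
  have hmem : m ∈ (↑N * ↑R : Set G) := by
    rw [← Subgroup.normal_mul]
    exact hm
  obtain ⟨n, hn, r, hrmem, rfl⟩ := hmem
  have hc : r * x * r⁻¹ * x⁻¹ ∈ N ⊓ R := by
    have h := habel (Subgroup.commutator_mem_commutator hrmem hx)
    rwa [commutatorElement_def] at h
  have hnx : n * x * n⁻¹ * x⁻¹ ∈ N ⊓ R := by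
    constructor
    · have h1 : n * x * n⁻¹ * x⁻¹ = n * (x * n⁻¹ * x⁻¹) := by group
      rw [h1]
      exact N.mul_mem hn (hN.conj_mem n⁻¹ (N.inv_mem hn) x)
    · exact R.mul_mem (hR.conj_mem x hx n) (R.inv_mem hx)
  have key : (n*r) * x * (n*r)⁻¹ * x⁻¹
      = (n * (r * x * r⁻¹ * x⁻¹) * n⁻¹) * (n * x * n⁻¹ * x⁻¹) := by group
  rw [key]
  exact Subgroup.mul_mem _ (hLnorm.conj_mem _ hc n) hnx

lemma lam_conj {G : Type} [Group G] (N R : Subgroup G) [N.Normal] [hR : R.Normal]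
    (habel : ⁅R, R⁆ ≤ N ⊓ R) (lam : ↥R →* ℂˣ)
    (htriv : ∀ x : ↥R, (x : G) ∈ N ⊓ R → lam x = 1)
    {m : G} (hm : m ∈ N ⊔ R) (x : ↥R) (hx' : m * (x : G) * m⁻¹ ∈ R) :
    lam ⟨m * (x : G) * m⁻¹, hx'⟩ = lam x := by
  have hc : m * (x : G) * m⁻¹ * (x : G)⁻¹ ∈ N ⊓ R := conj_comm_mem N R habel hm x.2
  have hsplit : (⟨m * (x : G) * m⁻¹, hx'⟩ : ↥R)
      = ⟨m * (x : G) * m⁻¹ * (x : G)⁻¹, hc.2⟩ * x := by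
    ext
    push_cast
    group
  rw [hsplit, map_mul, htriv _ hc, one_mul]

lemma conjfix_conj {G : Type} [Group G] [Fintype G] (N R : Subgroup G)
    [hN : N.Normal] [hR : R.Normal]
    (habel : ⁅R, R⁆ ≤ N ⊓ R)
    (θ : ↥(N ⊓ R) → ℂ) (hθ : IsIrrChar ↥(N ⊓ R) θ) (hθinv : ∀ g : G, ConjFix θ g)
    (φ : ↥R → ℂ) (hφ : IsIrrChar ↥R φ)
    (hφθ : resSub (inf_le_right : N ⊓ R ≤ R) φ = θ)
    (g m : G) (hm : m ∈ N ⊔ R) (hfix : ConjFix φ m) :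
    ConjFix φ (g * m * g⁻¹) := by
  obtain ⟨lam, htriv, hkey⟩ := key_lambda N R habel θ hθ hθinv φ hφ hφθ g
  intro x hx hx'
  have hy : g⁻¹ * x * g ∈ R := by
    have h := hR.conj_mem x hx g⁻¹
    simpa using h
  have hmy : m * (g⁻¹ * x * g) * m⁻¹ ∈ R := hR.conj_mem _ hy m
  have hgmy : g * (m * (g⁻¹ * x * g) * m⁻¹) * g⁻¹ ∈ R := hR.conj_mem _ hmy g
  have hgy : g * (g⁻¹ * x * g) * g⁻¹ ∈ R := hR.conj_mem _ hy g
  have heq1 : (g * m * g⁻¹) * x * (g * m * g⁻¹)⁻¹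
      = g * (m * (g⁻¹ * x * g) * m⁻¹) * g⁻¹ := by group
  have h2 := hkey ⟨m * (g⁻¹ * x * g) * m⁻¹, hmy⟩ hgmy
  have h3 : lam ⟨m * (g⁻¹ * x * g) * m⁻¹, hmy⟩ = lam ⟨g⁻¹ * x * g, hy⟩ :=
    lam_conj N R habel lam htriv hm ⟨g⁻¹ * x * g, hy⟩ hmy
  have h4 : φ ⟨m * (g⁻¹ * x * g) * m⁻¹, hmy⟩ = φ ⟨g⁻¹ * x * g, hy⟩ :=
    hfix (g⁻¹ * x * g) hy hmy
  have h5 := hkey ⟨g⁻¹ * x * g, hy⟩ hgy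
  calc φ ⟨(g * m * g⁻¹) * x * (g * m * g⁻¹)⁻¹, hx'⟩
      = φ ⟨g * (m * (g⁻¹ * x * g) * m⁻¹) * g⁻¹, hgmy⟩ := congrArg φ (Subtype.ext heq1)
    _ = (lam ⟨m * (g⁻¹ * x * g) * m⁻¹, hmy⟩ : ℂ) * φ ⟨m * (g⁻¹ * x * g) * m⁻¹, hmy⟩ := h2
    _ = (lam ⟨g⁻¹ * x * g, hy⟩ : ℂ) * φ ⟨g⁻¹ * x * g, hy⟩ := by rw [h3, h4]
    _ = φ ⟨g * (g⁻¹ * x * g) * g⁻¹, hgy⟩ := h5.symm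
    _ = φ ⟨x, hx⟩ := congrArg φ (Subtype.ext (by group))

end Main

end Aux15
/-- With `N, R ◁ G`, `L = N ⊓ R`, `M = NR`, `R/L` abelian, `θ ∈ Irr(L)` `G`-invariant,
`φ ∈ Irr(R)` with `φ_L = θ`, and `B` the stabilizer of `φ` in `G`: one has
`M ⊓ B = M ⊓ B^g` for all `g ∈ G` (where `B^g = g⁻¹Bg`), and `M ⊓ B` is normal in `G`. -/
theorem statement15 {G : Type} [Group G] [Fintype G] (N R : Subgroup G)
    [hN : N.Normal] [hR : R.Normal]
    (habel : ⁅R, R⁆ ≤ N ⊓ R)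
    (θ : ↥(N ⊓ R) → ℂ) (hθ : IsIrrChar ↥(N ⊓ R) θ) (hθinv : ∀ g : G, ConjFix θ g)
    (φ : ↥R → ℂ) (hφ : IsIrrChar ↥R φ)
    (hφθ : resSub (inf_le_right : N ⊓ R ≤ R) φ = θ)
    (B : Subgroup G) (hB : ∀ g : G, g ∈ B ↔ ConjFix φ g) :
    (∀ g : G, (N ⊔ R) ⊓ B =
      (N ⊔ R) ⊓ Subgroup.map (MulAut.conj g⁻¹).toMonoidHom B) ∧
    ((N ⊔ R) ⊓ B).Normal := by
  have forward := Aux15.conjfix_conj N R habel θ hθ hθinv φ hφ hφθ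
  have hsupn : (N ⊔ R).Normal := inferInstance
  constructor
  · intro g
    ext m
    simp only [Subgroup.mem_inf, Subgroup.mem_map]
    constructor
    · rintro ⟨hmM, hmB⟩
      refine ⟨hmM, g * m * g⁻¹, (hB _).mpr (forward g m hmM ((hB m).mp hmB)), ?_⟩
      show (MulAut.conj g⁻¹) (g * m * g⁻¹) = m
      rw [MulAut.conj_apply]
      group
    · rintro ⟨hmM, b, hbB, hbm⟩
      have hb : b = g * m * g⁻¹ := by
        have h0 : (MulAut.conj g⁻¹) b = m := hbm
        rw [MulAut.conj_apply] at h0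
        rw [← h0]
        group
      subst hb
      have hM' : g * m * g⁻¹ ∈ N ⊔ R := hsupn.conj_mem m hmM g
      have h := forward g⁻¹ (g * m * g⁻¹) hM' ((hB _).mp hbB)
      have heq : g⁻¹ * (g * m * g⁻¹) * g⁻¹⁻¹ = m := by group
      rw [heq] at h
      exact ⟨hmM, (hB m).mpr h⟩
  · constructor
    intro m hm g
    rw [Subgroup.mem_inf] at hm ⊢
    exact ⟨hsupn.conj_mem m hm.1 g, (hB _).mpr (forward g m hm.1 ((hB m).mp hm.2))⟩
end
end
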